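/- arXiv:2508.17228 — 2 statements merged into one kernel-verified Lean document; each statement's English description precedes it below -/
import Mathlib

section
/- Let λ ∈ ℝ and let (Y_j)_{j≥1} be i.i.d. real random variables with all moments finite. For all integers n, l ≥ 0, the probabilistic degenerate Bell numbers φ^Y_{n,λ} = φ^Y_{n,λ}(1) satisfy: φ^Y_{l+n,λ} = Σ_{k=0}^{n} Σ_{m=0}^{l} C(l,m) (1/k!) Σ_{l₁+⋯+l_k = n, each lᵢ ≥ 1} C(n; l₁,…,l_k) · E[(S_k − nλ)_{l−m,λ} · ∏_{i=1}^{k} (Y_i)_{l_i,λ}] · φ^Y_{m,λ}, where the inner sum is over all k-tuples (l₁,…,l_k) of positive integers with l₁+⋯+l_k = n and C(n; l₁,…,l_k) = n!/(l₁!⋯l_k!) is the multinomial coefficient. -/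
open MeasureTheory ProbabilityTheory Finset

/-- The degenerate falling factorial `(x)_{n,λ} = ∏_{i=0}^{n-1} (x - iλ)`. -/
noncomputable def degFall (lam x : ℝ) (n : ℕ) : ℝ :=
  ∏ i ∈ Finset.range n, (x - (i : ℝ) * lam)

/-- The probabilistic degenerate Stirling numbers of the second kind associated with `Y`:
`{n \brace k}_{Y,λ} = (1/k!) ∑_{j=0}^{k} (-1)^{k-j} C(k,j) E[(S_j)_{n,λ}]`. -/
noncomputable def probDegStirling {Ω : Type*} [MeasurableSpace Ω] (μ : Measure Ω)
    (Y : ℕ → Ω → ℝ) (lam : ℝ) (n k : ℕ) : ℝ :=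
  (1 / (Nat.factorial k : ℝ)) * ∑ j ∈ Finset.range (k + 1),
    (-1 : ℝ) ^ (k - j) * (Nat.choose k j : ℝ) *
      ∫ ω, degFall lam (∑ i ∈ Finset.range j, Y i ω) n ∂μ

/-- The probabilistic degenerate Bell polynomials associated with `Y`:
`φ^Y_{n,λ}(x) = ∑_{k=0}^{n} {n \brace k}_{Y,λ} x^k`. -/
noncomputable def probDegBell {Ω : Type*} [MeasurableSpace Ω] (μ : Measure Ω)
    (Y : ℕ → Ω → ℝ) (lam : ℝ) (n : ℕ) (x : ℝ) : ℝ :=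
  ∑ k ∈ Finset.range (n + 1), probDegStirling μ Y lam n k * x ^ k

/-- The probabilistic degenerate Bell numbers associated with `Y`: `φ^Y_{n,λ} = φ^Y_{n,λ}(1)`. -/
noncomputable def probDegBellNum {Ω : Type*} [MeasurableSpace Ω] (μ : Measure Ω)
    (Y : ℕ → Ω → ℝ) (lam : ℝ) (n : ℕ) : ℝ :=
  probDegBell μ Y lam n 1

set_option linter.unusedSectionVars false
open scoped Nat

namespace SpiveyAux

/-! ### Multinomial helper lemmas -/

lemma multinomial_erase {k : ℕ} (i : Fin (k+1)) (t : Fin (k+1) → ℕ) :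
    Nat.multinomial (Finset.univ.erase i) t = Nat.multinomial Finset.univ (t ∘ i.succAbove) := by
  unfold Nat.multinomial
  have hs : ∑ j ∈ Finset.univ.erase i, t j = ∑ j : Fin k, (t ∘ i.succAbove) j := by
    simp only [Function.comp]
    have h1 : t i + ∑ j ∈ Finset.univ.erase i, t j = ∑ j, t j :=
      Finset.add_sum_erase _ t (Finset.mem_univ i)
    have h2 : ∑ j, t j = t i + ∑ j : Fin k, t (i.succAbove j) := Fin.sum_univ_succAbove t i
    omega
  have hp : ∏ j ∈ Finset.univ.erase i, (t j)! = ∏ j : Fin k, ((t ∘ i.succAbove) j)! := by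
    simp only [Function.comp]
    have h1 : (t i)! * ∏ j ∈ Finset.univ.erase i, (t j)! = ∏ j, (t j)! :=
      Finset.mul_prod_erase _ (fun j => (t j)!) (Finset.mem_univ i)
    have h2 : ∏ j, (t j)! = (t i)! * ∏ j : Fin k, (t (i.succAbove j))! :=
      Fin.prod_univ_succAbove (fun j => (t j)!) i
    have := h1.trans h2
    exact Nat.eq_of_mul_eq_mul_left (Nat.factorial_pos _) this
  rw [hs, hp]

lemma multinomial_eq_choose_mul {k : ℕ} (i : Fin (k+1)) (t : Fin (k+1) → ℕ) :
    Nat.multinomial Finset.univ t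
      = (∑ j, t j).choose (t i) * Nat.multinomial Finset.univ (t ∘ i.succAbove) := by
  have h := Nat.multinomial_insert (s := Finset.univ.erase i) (a := i)
    (Finset.notMem_erase i _) t
  rw [Finset.insert_erase (Finset.mem_univ i)] at h
  rw [h, multinomial_erase]
  congr 2
  have h2 : ∑ j, t j = t i + ∑ j : Fin k, t (i.succAbove j) := Fin.sum_univ_succAbove t i
  have h1 : t i + ∑ j ∈ Finset.univ.erase i, t j = ∑ j, t j :=
    Finset.add_sum_erase _ t (Finset.mem_univ i)
  omega

lemma multinomial_insertNth {k : ℕ} (i : Fin (k+1)) (a : ℕ) (t : Fin k → ℕ) :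
    Nat.multinomial Finset.univ (i.insertNth a t)
      = (a + ∑ j, t j).choose a * Nat.multinomial Finset.univ t := by
  rw [multinomial_eq_choose_mul i]
  have h1 : (i.insertNth a t) ∘ i.succAbove = t := by
    funext j; simp [Function.comp]
  have h2 : Fin.insertNth (α := fun _ => ℕ) i a t i = a := by simp
  rw [h1, Fin.sum_univ_succAbove (Fin.insertNth (α := fun _ => ℕ) i a t) i, h2]
  have h3 : ∑ j : Fin k, Fin.insertNth (α := fun _ => ℕ) i a t (i.succAbove j) = ∑ j, t j :=
    Finset.sum_congr rfl fun j _ => by simp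
  rw [h3]

lemma multinomial_zero_fn {k : ℕ} : Nat.multinomial (Finset.univ : Finset (Fin k)) (fun _ => 0) = 1 := by
  have := Nat.multinomial_spec (Finset.univ : Finset (Fin k)) (fun _ => 0)
  simpa using this

/-- symmetric removal identity for multinomial coefficients -/
lemma multinomial_symm_removal {k n : ℕ} (t : Fin (k+1) → ℕ) (hpos : ∀ i, 0 < t i)
    (hsum : ∑ i, t i = n + 1) :
    Nat.multinomial Finset.univ t
      = ∑ i : Fin (k+1), n.choose (t i - 1) * Nat.multinomial Finset.univ (t ∘ i.succAbove) := by
  apply Nat.eq_of_mul_eq_mul_left (show 0 < n+1 by omega)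
  rw [Finset.mul_sum]
  have key : ∀ i : Fin (k+1),
      (n+1) * (n.choose (t i - 1) * Nat.multinomial Finset.univ (t ∘ i.succAbove))
        = t i * Nat.multinomial Finset.univ t := by
    intro i
    have h1 : (n+1) * n.choose (t i - 1) = (n+1).choose (t i) * t i := by
      have := Nat.add_one_mul_choose_eq n (t i - 1)
      have hti : t i - 1 + 1 = t i := Nat.succ_pred_eq_of_pos (hpos i)
      rw [← hti]; exact this
    have h2 : Nat.multinomial Finset.univ t
        = (n+1).choose (t i) * Nat.multinomial Finset.univ (t ∘ i.succAbove) := by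
      rw [multinomial_eq_choose_mul i, hsum]
    rw [← mul_assoc, h1, h2]; ring
  rw [Finset.sum_congr rfl (fun i _ => key i), ← Finset.sum_mul, hsum]

/-! ### Splitting sums over antidiagonal tuples -/

lemma split_sum {M : Type*} [AddCommMonoid M] (k N : ℕ) (i : Fin (k+1))
    (f : (Fin (k+1) → ℕ) → M) :
    ∑ t ∈ Finset.Nat.antidiagonalTuple (k+1) N, f t
      = ∑ a ∈ Finset.range (N+1), ∑ t' ∈ Finset.Nat.antidiagonalTuple k (N - a),
          f (i.insertNth a t') := by
  rw [Finset.sum_sigma']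
  refine Finset.sum_nbij' (i := fun t => (⟨t i, t ∘ i.succAbove⟩ :
      (_ : ℕ) × (Fin k → ℕ))) (j := fun p => i.insertNth p.1 p.2) ?_ ?_ ?_ ?_ ?_
  · intro t ht
    rw [Finset.Nat.mem_antidiagonalTuple] at ht
    have h2 : ∑ j, t j = t i + ∑ j : Fin k, t (i.succAbove j) := Fin.sum_univ_succAbove t i
    simp only [Finset.mem_sigma, Finset.mem_range, Finset.Nat.mem_antidiagonalTuple,
      Function.comp]
    omega
  · rintro ⟨a, t'⟩ hp
    simp only [Finset.mem_sigma, Finset.mem_range, Finset.Nat.mem_antidiagonalTuple] at hp ⊢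
    have h3 : ∑ j, Fin.insertNth (α := fun _ => ℕ) i a t' j
        = Fin.insertNth (α := fun _ => ℕ) i a t' i
          + ∑ j : Fin k, Fin.insertNth (α := fun _ => ℕ) i a t' (i.succAbove j) :=
      Fin.sum_univ_succAbove _ i
    simp only [Fin.insertNth_apply_same, Fin.insertNth_apply_succAbove] at h3
    omega
  · intro t ht
    exact Fin.insertNth_self_removeNth i t
  · rintro ⟨a, t'⟩ hp
    have h2 : Fin.insertNth (α := fun _ => ℕ) i a t' i = a := by simp
    have h1 : ∀ j, Fin.insertNth (α := fun _ => ℕ) i a t' (i.succAbove j) = t' j :=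
      fun j => by simp
    exact Sigma.ext h2 (heq_of_eq (funext fun j => h1 j))
  · intro t ht
    exact congrArg f (Fin.insertNth_self_removeNth i t).symm

lemma pos_insertNth_iff {k : ℕ} (i : Fin (k+1)) (a : ℕ) (t : Fin k → ℕ) :
    (∀ j, 0 < Fin.insertNth (α := fun _ => ℕ) i a t j) ↔ 0 < a ∧ ∀ j, 0 < t j := by
  constructor
  · intro h
    refine ⟨by simpa using h i, fun j => by simpa using h (i.succAbove j)⟩
  · rintro ⟨ha, ht⟩ j
    rcases eq_or_ne j i with rfl | hj
    · simpa using ha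
    · obtain ⟨j', rfl⟩ := Fin.exists_succAbove_eq hj
      simpa using ht j'

lemma split_sum_pos {M : Type*} [AddCommMonoid M] (k N : ℕ) (i : Fin (k+1))
    (f : (Fin (k+1) → ℕ) → M) :
    ∑ t ∈ (Finset.Nat.antidiagonalTuple (k+1) N).filter (fun t => ∀ j, 0 < t j), f t
      = ∑ a ∈ Finset.range N, ∑ t' ∈ (Finset.Nat.antidiagonalTuple k (N - (a+1))).filter
          (fun t => ∀ j, 0 < t j), f (i.insertNth (a+1) t') := by
  rw [Finset.sum_filter, split_sum k N i, Finset.sum_range_succ']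
  simp only [pos_insertNth_iff, lt_self_iff_false, false_and, if_false,
    Finset.sum_const_zero, add_zero, Nat.zero_lt_succ, true_and]
  apply Finset.sum_congr rfl
  intro a _
  rw [Finset.sum_filter]


lemma insertNth_comp_succAbove {k : ℕ} (i : Fin (k+1)) (a : ℕ) (t : Fin k → ℕ) :
    (i.insertNth a t) ∘ i.succAbove = t := funext fun j => by simp [Function.comp]

/-! ### Weighted composition sums -/

noncomputable def Bw (w : ℕ → ℝ) (N k : ℕ) : ℝ :=
  ∑ t ∈ (Finset.Nat.antidiagonalTuple k N).filter (fun t => ∀ i, 0 < t i),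
    (Nat.multinomial Finset.univ t : ℝ) * ∏ i, w (t i)

noncomputable def Dw (w : ℕ → ℝ) (k n q : ℕ) : ℝ :=
  ∑ t ∈ (Finset.Nat.antidiagonalTuple k n).filter (fun t => ∀ i, 0 < t i),
    (Nat.multinomial Finset.univ t : ℝ) *
      ∑ r ∈ Finset.Nat.antidiagonalTuple k q,
        (Nat.multinomial Finset.univ r : ℝ) * ∏ i, w (t i + r i)

noncomputable def Phiw (w : ℕ → ℝ) (N : ℕ) : ℝ :=
  ∑ k ∈ Finset.range (N+1), (1 / (Nat.factorial k : ℝ)) * Bw w N k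

noncomputable def Aw (w : ℕ → ℝ) (N j : ℕ) : ℝ :=
  ∑ t ∈ Finset.Nat.antidiagonalTuple j N,
    (Nat.multinomial Finset.univ t : ℝ) * ∏ i, w (t i)

lemma Bw_eq_zero {w : ℕ → ℝ} {N k : ℕ} (h : N < k) : Bw w N k = 0 := by
  apply Finset.sum_eq_zero
  intro t ht
  rw [Finset.mem_filter, Finset.Nat.mem_antidiagonalTuple] at ht
  exfalso
  have : (Finset.univ : Finset (Fin k)).card • 1 ≤ ∑ i, t i :=
    Finset.card_nsmul_le_sum _ _ _ (fun i _ => ht.2 i)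
  simp only [Finset.card_univ, Fintype.card_fin, smul_eq_mul, mul_one] at this
  omega

lemma Dw_eq_zero {w : ℕ → ℝ} {k n q : ℕ} (h : n < k) : Dw w k n q = 0 := by
  apply Finset.sum_eq_zero
  intro t ht
  rw [Finset.mem_filter, Finset.Nat.mem_antidiagonalTuple] at ht
  exfalso
  have : (Finset.univ : Finset (Fin k)).card • 1 ≤ ∑ i, t i :=
    Finset.card_nsmul_le_sum _ _ _ (fun i _ => ht.2 i)
  simp only [Finset.card_univ, Fintype.card_fin, smul_eq_mul, mul_one] at this
  omega

lemma Dw_zero_left (w : ℕ → ℝ) (n q : ℕ) :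
    Dw w 0 n q = if n = 0 ∧ q = 0 then 1 else 0 := by
  rcases n with _ | n
  · rcases q with _ | q
    · rw [Dw]
      simp [Finset.Nat.antidiagonalTuple_zero_right, multinomial_zero_fn,
        Finset.filter_singleton]
    · rw [Dw]
      simp [Finset.Nat.antidiagonalTuple_zero_right, Finset.Nat.antidiagonalTuple_zero_succ,
        Finset.filter_singleton]
  · rw [Dw]
    simp [Finset.Nat.antidiagonalTuple_zero_succ]

lemma Dw_q_zero (w : ℕ → ℝ) (k n : ℕ) : Dw w k n 0 = Bw w n k := by
  rw [Dw, Bw]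
  apply Finset.sum_congr rfl
  intro t ht
  congr 1
  rw [Finset.Nat.antidiagonalTuple_zero_right, Finset.sum_singleton]
  have hm : Nat.multinomial (Finset.univ : Finset (Fin k)) (0 : Fin k → ℕ) = 1 :=
    multinomial_zero_fn
  rw [hm]
  simp

lemma Dw_succ (w : ℕ → ℝ) (k n q : ℕ) :
    Dw w (k+1) (n+1) q
      = (k+1 : ℝ) * ∑ a ∈ Finset.range (n+1), ∑ b ∈ Finset.range (q+1),
          (n.choose a : ℝ) * (q.choose b : ℝ) * w (a+b+1) * Dw w k (n-a) (q-b) := by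
  classical
  have key : ∀ i : Fin (k+1),
      (∑ t ∈ (Finset.Nat.antidiagonalTuple (k+1) (n+1)).filter (fun t => ∀ j, 0 < t j),
        ((n.choose (t i - 1) : ℝ) * (Nat.multinomial Finset.univ (t ∘ i.succAbove) : ℝ)) *
          ∑ r ∈ Finset.Nat.antidiagonalTuple (k+1) q,
            (Nat.multinomial Finset.univ r : ℝ) * ∏ j, w (t j + r j))
      = ∑ a ∈ Finset.range (n+1), ∑ b ∈ Finset.range (q+1),
          (n.choose a : ℝ) * (q.choose b : ℝ) * w (a+b+1) * Dw w k (n-a) (q-b) := by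
    intro i
    have stepA : ∀ t ∈ (Finset.Nat.antidiagonalTuple (k+1) (n+1)).filter
        (fun t => ∀ j, 0 < t j),
        ((n.choose (t i - 1) : ℝ) * (Nat.multinomial Finset.univ (t ∘ i.succAbove) : ℝ)) *
          (∑ r ∈ Finset.Nat.antidiagonalTuple (k+1) q,
            (Nat.multinomial Finset.univ r : ℝ) * ∏ j, w (t j + r j))
        = ((n.choose (t i - 1) : ℝ) * (Nat.multinomial Finset.univ (t ∘ i.succAbove) : ℝ)) *
            ∑ b ∈ Finset.range (q+1), ∑ r' ∈ Finset.Nat.antidiagonalTuple k (q-b),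
              (q.choose b : ℝ) * ((Nat.multinomial Finset.univ r' : ℝ) *
                (w (t i + b) * ∏ j, w (t (i.succAbove j) + r' j))) := by
      intro t ht
      congr 1
      rw [split_sum (k := k) (N := q) i
        (f := fun r => (Nat.multinomial Finset.univ r : ℝ) * ∏ j, w (t j + r j))]
      apply Finset.sum_congr rfl
      intro b hb
      rw [Finset.mem_range] at hb
      apply Finset.sum_congr rfl
      intro r' hr'
      rw [Finset.Nat.mem_antidiagonalTuple] at hr'
      rw [multinomial_insertNth, hr']
      have hbq : b + (q - b) = q := by omega
      rw [hbq]
      rw [Fin.prod_univ_succAbove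
        (fun j => w (t j + (Fin.insertNth (α := fun _ => ℕ) i b r') j)) i]
      simp only [Fin.insertNth_apply_same, Fin.insertNth_apply_succAbove]
      push_cast
      ring
    rw [Finset.sum_congr rfl stepA]
    rw [split_sum_pos (k := k) (N := n+1) i]
    simp only [Fin.insertNth_apply_same, Fin.insertNth_apply_succAbove,
      insertNth_comp_succAbove, Nat.add_sub_cancel, Nat.add_sub_add_right]
    have hw : ∀ x y : ℕ, x + 1 + y = x + y + 1 := fun x y => by omega
    simp only [hw]
    apply Finset.sum_congr rfl
    intro a ha
    simp only [Finset.mul_sum]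
    rw [Finset.sum_comm]
    apply Finset.sum_congr rfl
    intro b _
    simp only [Dw, Finset.mul_sum]
    apply Finset.sum_congr rfl
    intro t' _
    apply Finset.sum_congr rfl
    intro r' _
    ring
  rw [Dw]
  have expand : ∀ t ∈ (Finset.Nat.antidiagonalTuple (k+1) (n+1)).filter (fun t => ∀ j, 0 < t j),
      (Nat.multinomial Finset.univ t : ℝ) *
        (∑ r ∈ Finset.Nat.antidiagonalTuple (k+1) q,
          (Nat.multinomial Finset.univ r : ℝ) * ∏ j, w (t j + r j))
      = ∑ i : Fin (k+1),
          ((n.choose (t i - 1) : ℝ) * (Nat.multinomial Finset.univ (t ∘ i.succAbove) : ℝ)) *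
            ∑ r ∈ Finset.Nat.antidiagonalTuple (k+1) q,
              (Nat.multinomial Finset.univ r : ℝ) * ∏ j, w (t j + r j) := by
    intro t ht
    rw [Finset.mem_filter, Finset.Nat.mem_antidiagonalTuple] at ht
    rw [← Finset.sum_mul]
    congr 1
    rw [multinomial_symm_removal t ht.2 ht.1]
    push_cast
    rfl
  rw [Finset.sum_congr rfl expand, Finset.sum_comm]
  rw [Finset.sum_congr rfl (fun i (_ : i ∈ Finset.univ) => key i)]
  rw [Finset.sum_const, Finset.card_univ, Fintype.card_fin, nsmul_eq_mul]
  push_cast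
  ring


lemma Bw_zero_left (w : ℕ → ℝ) (N : ℕ) : Bw w (N+1) 0 = 0 := by
  rw [Bw]
  simp [Finset.Nat.antidiagonalTuple_zero_succ]

lemma Bw_succ (w : ℕ → ℝ) (M k : ℕ) :
    Bw w (M+1) (k+1)
      = (k+1 : ℝ) * ∑ a ∈ Finset.range (M+1), (M.choose a : ℝ) * w (a+1) * Bw w (M-a) k := by
  rw [← Dw_q_zero, Dw_succ]
  congr 1
  apply Finset.sum_congr rfl
  intro a _
  rw [Finset.sum_range_one]
  rw [Dw_q_zero]
  norm_num

lemma Phiw_truncate (w : ℕ → ℝ) {N M : ℕ} (h : N ≤ M) :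
    Phiw w N = ∑ k ∈ Finset.range (M+1), (1 / (Nat.factorial k : ℝ)) * Bw w N k := by
  rw [Phiw]
  apply Finset.sum_subset
  · intro x hx
    rw [Finset.mem_range] at hx ⊢
    omega
  · intro x hx hnx
    rw [Finset.mem_range] at hx hnx
    rw [Bw_eq_zero (by omega), mul_zero]

lemma Phiw_succ (w : ℕ → ℝ) (M : ℕ) :
    Phiw w (M+1) = ∑ a ∈ Finset.range (M+1), (M.choose a : ℝ) * w (a+1) * Phiw w (M-a) := by
  rw [Phiw, Finset.sum_range_succ']
  rw [Bw_zero_left, mul_zero, add_zero]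
  have h1 : ∀ k ∈ Finset.range (M+1), (1 / (Nat.factorial (k+1) : ℝ)) * Bw w (M+1) (k+1)
      = ∑ a ∈ Finset.range (M+1), (M.choose a : ℝ) * w (a+1)
          * ((1 / (Nat.factorial k : ℝ)) * Bw w (M-a) k) := by
    intro k _
    rw [Bw_succ]
    have hfac : (Nat.factorial (k+1) : ℝ) = (k+1 : ℝ) * (Nat.factorial k : ℝ) := by
      push_cast [Nat.factorial_succ]
      ring
    rw [hfac, ← mul_assoc]
    have hc : 1 / ((k+1 : ℝ) * (Nat.factorial k : ℝ)) * (k+1 : ℝ)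
        = 1 / (Nat.factorial k : ℝ) := by
      have h1 : (k+1 : ℝ) ≠ 0 := by positivity
      have h2 : (Nat.factorial k : ℝ) ≠ 0 := by
        exact_mod_cast Nat.factorial_ne_zero k
      field_simp
    rw [hc, Finset.mul_sum]
    apply Finset.sum_congr rfl
    intro a _
    ring
  rw [Finset.sum_congr rfl h1, Finset.sum_comm]
  apply Finset.sum_congr rfl
  intro a ha
  rw [← Finset.mul_sum]
  rw [Phiw_truncate w (show M - a ≤ M by omega)]

/-- Vandermonde-split form of the Phiw recurrence. -/
lemma Phiw_add_succ (w : ℕ → ℝ) (n l : ℕ) :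
    Phiw w (l + n + 1)
      = ∑ a ∈ Finset.range (n+1), ∑ b ∈ Finset.range (l+1),
          (n.choose a : ℝ) * (l.choose b : ℝ) * w (a+b+1) * Phiw w ((l - b) + (n - a)) := by
  rw [Phiw_succ]
  have hcast : ∀ c ∈ Finset.range (l+n+1),
      ((l+n).choose c : ℝ) * w (c+1) * Phiw w (l+n-c)
      = ∑ x ∈ Finset.range (c+1),
          (l.choose x : ℝ) * (n.choose (c-x) : ℝ) * (w (c+1) * Phiw w (l+n-c)) := by
    intro c _
    rw [Nat.add_choose_eq, Finset.Nat.sum_antidiagonal_eq_sum_range_succ_mk]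
    push_cast
    rw [Finset.sum_mul, Finset.sum_mul]
    apply Finset.sum_congr rfl
    intro x _
    ring
  rw [Finset.sum_congr rfl hcast]
  have hbox : ∀ c ∈ Finset.range (l+n+1),
      ∑ x ∈ Finset.range (c+1),
          (l.choose x : ℝ) * (n.choose (c-x) : ℝ) * (w (c+1) * Phiw w (l+n-c))
      = ∑ x ∈ Finset.range (l+n+1), if x ≤ c then
          (l.choose x : ℝ) * (n.choose (c-x) : ℝ) * (w (c+1) * Phiw w (l+n-c)) else 0 := by
    intro c hc
    rw [Finset.mem_range] at hc
    rw [← Finset.sum_filter]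
    apply Finset.sum_congr
    · ext x
      simp only [Finset.mem_filter, Finset.mem_range]
      omega
    · intro x _; rfl
  rw [Finset.sum_congr rfl hbox, Finset.sum_comm]
  have hcol : ∀ x ∈ Finset.range (l+n+1),
      (∑ c ∈ Finset.range (l+n+1), if x ≤ c then
          (l.choose x : ℝ) * (n.choose (c-x) : ℝ) * (w (c+1) * Phiw w (l+n-c)) else 0)
      = ∑ y ∈ Finset.range (l+n+1-x),
          (l.choose x : ℝ) * (n.choose y : ℝ) * (w (x+y+1) * Phiw w (l+n-(x+y))) := by
    intro x hx
    rw [Finset.mem_range] at hx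
    rw [← Finset.sum_filter]
    have hset : (Finset.range (l+n+1)).filter (fun c => x ≤ c) = Finset.Ico x (l+n+1) := by
      ext c
      simp only [Finset.mem_filter, Finset.mem_range, Finset.mem_Ico]
      omega
    rw [hset, Finset.sum_Ico_eq_sum_range]
    apply Finset.sum_congr rfl
    intro y _
    have h1 : x + y - x = y := by omega
    have h2 : x + y + 1 = x + y + 1 := rfl
    rw [h1]
  rw [Finset.sum_congr rfl hcol]
  -- truncate x to range (l+1)
  have htrx : ∑ x ∈ Finset.range (l+n+1), ∑ y ∈ Finset.range (l+n+1-x),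
        (l.choose x : ℝ) * (n.choose y : ℝ) * (w (x+y+1) * Phiw w (l+n-(x+y)))
      = ∑ x ∈ Finset.range (l+1), ∑ y ∈ Finset.range (l+n+1-x),
        (l.choose x : ℝ) * (n.choose y : ℝ) * (w (x+y+1) * Phiw w (l+n-(x+y))) := by
    symm
    apply Finset.sum_subset
    · intro x hx
      rw [Finset.mem_range] at hx ⊢
      omega
    · intro x hx hnx
      rw [Finset.mem_range] at hx hnx
      have : l.choose x = 0 := Nat.choose_eq_zero_of_lt (by omega)
      rw [this]
      push_cast
      simp
  rw [htrx]
  have htry : ∀ x ∈ Finset.range (l+1),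
      ∑ y ∈ Finset.range (l+n+1-x),
        (l.choose x : ℝ) * (n.choose y : ℝ) * (w (x+y+1) * Phiw w (l+n-(x+y)))
      = ∑ y ∈ Finset.range (n+1),
        (l.choose x : ℝ) * (n.choose y : ℝ) * (w (x+y+1) * Phiw w (l+n-(x+y))) := by
    intro x hx
    rw [Finset.mem_range] at hx
    symm
    apply Finset.sum_subset
    · intro y hy
      rw [Finset.mem_range] at hy ⊢
      omega
    · intro y hy hny
      rw [Finset.mem_range] at hy hny
      have : n.choose y = 0 := Nat.choose_eq_zero_of_lt (by omega)
      rw [this]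
      push_cast
      simp
  rw [Finset.sum_congr rfl htry, Finset.sum_comm]
  apply Finset.sum_congr rfl
  intro a ha
  rw [Finset.mem_range] at ha
  apply Finset.sum_congr rfl
  intro b hb
  rw [Finset.mem_range] at hb
  have h1 : b + a + 1 = a + b + 1 := by omega
  have h2 : l + n - (b + a) = (l - b) + (n - a) := by omega
  rw [h1, h2]
  ring

lemma choose_mul_choose_symm (l b m : ℕ) :
    l.choose b * (l - b).choose m = l.choose m * (l - m).choose b := by
  by_cases h : b + m ≤ l
  · have h1 := Nat.choose_mul (n := l) (k := b + m) (s := b) (Nat.le_add_right _ _)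
    have h2 := Nat.choose_mul (n := l) (k := b + m) (s := m) (Nat.le_add_left _ _)
    rw [Nat.add_sub_cancel_left] at h1
    have hm : b + m - m = b := by omega
    rw [hm] at h2
    rw [← h1, ← h2, Nat.choose_symm_add]
  · have hlhs : l.choose b * (l - b).choose m = 0 := by
      by_cases hbl : b ≤ l
      · rw [Nat.choose_eq_zero_of_lt (show l - b < m by omega), mul_zero]
      · rw [Nat.choose_eq_zero_of_lt (show l < b by omega), zero_mul]
    have hrhs : l.choose m * (l - m).choose b = 0 := by
      by_cases hml : m ≤ l
      · rw [Nat.choose_eq_zero_of_lt (show l - m < b by omega), mul_zero]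
      · rw [Nat.choose_eq_zero_of_lt (show l < m by omega), zero_mul]
    rw [hlhs, hrhs]

lemma sum_swap4 {α : Type*} [AddCommMonoid α] (s1 s2 s3 s4 : Finset ℕ)
    (f : ℕ → ℕ → ℕ → ℕ → α) :
    ∑ a ∈ s1, ∑ b ∈ s2, ∑ k ∈ s3, ∑ m ∈ s4, f a b k m
      = ∑ k ∈ s3, ∑ m ∈ s4, ∑ a ∈ s1, ∑ b ∈ s2, f a b k m := by
  calc ∑ a ∈ s1, ∑ b ∈ s2, ∑ k ∈ s3, ∑ m ∈ s4, f a b k m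
      = ∑ a ∈ s1, ∑ k ∈ s3, ∑ b ∈ s2, ∑ m ∈ s4, f a b k m :=
        Finset.sum_congr rfl fun a _ => Finset.sum_comm
    _ = ∑ a ∈ s1, ∑ k ∈ s3, ∑ m ∈ s4, ∑ b ∈ s2, f a b k m :=
        Finset.sum_congr rfl fun a _ => Finset.sum_congr rfl fun k _ => Finset.sum_comm
    _ = ∑ k ∈ s3, ∑ a ∈ s1, ∑ m ∈ s4, ∑ b ∈ s2, f a b k m := Finset.sum_comm
    _ = ∑ k ∈ s3, ∑ m ∈ s4, ∑ a ∈ s1, ∑ b ∈ s2, f a b k m :=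
        Finset.sum_congr rfl fun k _ => Finset.sum_comm

/-- The core Spivey-type identity for the abstract weighted sums. -/
lemma core (w : ℕ → ℝ) : ∀ n l : ℕ, Phiw w (l + n)
    = ∑ k ∈ Finset.range (n+1), ∑ m ∈ Finset.range (l+1),
        (l.choose m : ℝ) * (1 / (Nat.factorial k : ℝ)) * Dw w k n (l - m) * Phiw w m := by
  intro n
  induction n using Nat.strong_induction_on with
  | _ n IH =>
    rcases n with _ | n
    · intro l
      rw [Finset.sum_range_one, Finset.sum_range_succ]
      have hz : ∀ m ∈ Finset.range l,
          (l.choose m : ℝ) * (1 / (Nat.factorial 0 : ℝ)) * Dw w 0 0 (l-m) * Phiw w m = 0 := by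
        intro m hm
        rw [Finset.mem_range] at hm
        rw [Dw_zero_left, if_neg (by omega)]
        ring
      rw [Finset.sum_eq_zero hz, zero_add, Dw_zero_left, if_pos ⟨rfl, by omega⟩,
        Nat.choose_self]
      simp [Nat.factorial]
    · intro l
      have hL : l + (n+1) = l + n + 1 := rfl
      rw [hL, Phiw_add_succ]
      -- RHS: peel k = 0 and expand Dw
      conv_rhs => rw [Finset.sum_range_succ']
      have hR0 : (∑ m ∈ Finset.range (l+1),
          (l.choose m : ℝ) * (1 / (Nat.factorial 0 : ℝ)) * Dw w 0 (n+1) (l - m) * Phiw w m)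
          = 0 := by
        apply Finset.sum_eq_zero
        intro m _
        rw [Dw_zero_left, if_neg (by omega)]
        ring
      rw [hR0, add_zero]
      have hRk : ∀ k ∈ Finset.range (n+1), ∑ m ∈ Finset.range (l+1),
          (l.choose m : ℝ) * (1 / (Nat.factorial (k+1) : ℝ)) * Dw w (k+1) (n+1) (l - m)
            * Phiw w m
          = ∑ m ∈ Finset.range (l+1), ∑ a ∈ Finset.range (n+1), ∑ b ∈ Finset.range (l-m+1),
              (l.choose m : ℝ) * (1 / (Nat.factorial k : ℝ)) * ((n.choose a : ℝ)
                * (((l-m).choose b : ℝ)) * w (a+b+1) * Dw w k (n-a) (l-m-b))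
                * Phiw w m := by
        intro k _
        apply Finset.sum_congr rfl
        intro m _
        have hfac : (Nat.factorial (k+1) : ℝ) = (k+1 : ℝ) * (Nat.factorial k : ℝ) := by
          push_cast [Nat.factorial_succ]
          ring
        have h2 : (Nat.factorial k : ℝ) ≠ 0 := by
          exact_mod_cast Nat.factorial_ne_zero k
        have hs : ∀ S c1 c2 F : ℝ, F ≠ 0 →
            c1 * (1 / ((k+1:ℝ) * F)) * ((k+1:ℝ) * S) * c2 = c1 * (1/F) * S * c2 := by
          intro S c1 c2 F hF
          field_simp
        rw [Dw_succ, hfac, hs _ _ _ _ h2]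
        rw [Finset.mul_sum, Finset.sum_mul]
        apply Finset.sum_congr rfl
        intro a _
        rw [Finset.mul_sum, Finset.sum_mul]
      rw [Finset.sum_congr rfl hRk]
      -- LHS: insert IH and extend ranges
      have hLHS : ∑ a ∈ Finset.range (n+1), ∑ b ∈ Finset.range (l+1),
          (n.choose a : ℝ) * (l.choose b : ℝ) * w (a+b+1) * Phiw w ((l - b) + (n - a))
          = ∑ a ∈ Finset.range (n+1), ∑ b ∈ Finset.range (l+1), ∑ k ∈ Finset.range (n+1),
              ∑ m ∈ Finset.range (l+1),
              (n.choose a : ℝ) * (l.choose b : ℝ) * w (a+b+1)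
                * (((l-b).choose m : ℝ) * (1 / (Nat.factorial k : ℝ))
                    * Dw w k (n-a) (l-b-m) * Phiw w m) := by
        apply Finset.sum_congr rfl
        intro a ha
        apply Finset.sum_congr rfl
        intro b hb
        rw [Finset.mem_range] at ha hb
        rw [IH (n-a) (by omega) (l-b)]
        have hm : ∀ k ∈ Finset.range (n-a+1),
            ∑ m ∈ Finset.range (l-b+1),
              ((l-b).choose m : ℝ) * (1 / (Nat.factorial k : ℝ)) * Dw w k (n-a) (l-b-m)
                * Phiw w m
            = ∑ m ∈ Finset.range (l+1),
              ((l-b).choose m : ℝ) * (1 / (Nat.factorial k : ℝ)) * Dw w k (n-a) (l-b-m)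
                * Phiw w m := by
          intro k _
          apply Finset.sum_subset
          · intro x hx
            rw [Finset.mem_range] at hx ⊢
            omega
          · intro x hx hnx
            rw [Finset.mem_range] at hx hnx
            rw [Nat.choose_eq_zero_of_lt (by omega)]
            push_cast
            ring
        rw [Finset.sum_congr rfl hm]
        have hk : ∑ k ∈ Finset.range (n-a+1), ∑ m ∈ Finset.range (l+1),
              ((l-b).choose m : ℝ) * (1 / (Nat.factorial k : ℝ)) * Dw w k (n-a) (l-b-m)
                * Phiw w m
            = ∑ k ∈ Finset.range (n+1), ∑ m ∈ Finset.range (l+1),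
              ((l-b).choose m : ℝ) * (1 / (Nat.factorial k : ℝ)) * Dw w k (n-a) (l-b-m)
                * Phiw w m := by
          apply Finset.sum_subset
          · intro x hx
            rw [Finset.mem_range] at hx ⊢
            omega
          · intro x hx hnx
            rw [Finset.mem_range] at hx hnx
            apply Finset.sum_eq_zero
            intro m _
            rw [Dw_eq_zero (by omega)]
            ring
        rw [hk, Finset.mul_sum]
        apply Finset.sum_congr rfl
        intro k _
        rw [Finset.mul_sum]
      rw [hLHS, sum_swap4]
      apply Finset.sum_congr rfl
      intro k _
      apply Finset.sum_congr rfl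
      intro m hm
      rw [Finset.mem_range] at hm
      -- extend the b-range on the RHS from range (l-m+1) to range (l+1)
      have hbext : ∀ a ∈ Finset.range (n+1),
          ∑ b ∈ Finset.range (l-m+1),
            (l.choose m : ℝ) * (1 / (Nat.factorial k : ℝ)) * ((n.choose a : ℝ)
              * (((l-m).choose b : ℝ)) * w (a+b+1) * Dw w k (n-a) (l-m-b))
              * Phiw w m
          = ∑ b ∈ Finset.range (l+1),
            (l.choose m : ℝ) * (1 / (Nat.factorial k : ℝ)) * ((n.choose a : ℝ)
              * (((l-m).choose b : ℝ)) * w (a+b+1) * Dw w k (n-a) (l-m-b))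
              * Phiw w m := by
        intro a _
        apply Finset.sum_subset
        · intro x hx
          rw [Finset.mem_range] at hx ⊢
          omega
        · intro x hx hnx
          rw [Finset.mem_range] at hx hnx
          rw [Nat.choose_eq_zero_of_lt (show l - m < x by omega)]
          push_cast
          ring
      rw [Finset.sum_congr rfl hbext]
      apply Finset.sum_congr rfl
      intro a _
      apply Finset.sum_congr rfl
      intro b hb
      rw [Finset.mem_range] at hb
      have hsub : l - b - m = l - m - b := by omega
      have hch : (l.choose b : ℝ) * ((l-b).choose m : ℝ)
          = (l.choose m : ℝ) * ((l-m).choose b : ℝ) := by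
        exact_mod_cast choose_mul_choose_symm l b m
      rw [hsub]
      linear_combination ((n.choose a : ℝ) * w (a+b+1) * (1 / (Nat.factorial k : ℝ))
        * Dw w k (n-a) (l-m-b) * Phiw w m) * hch


lemma Aw_succ (w : ℕ → ℝ) (N j : ℕ) :
    Aw w N (j+1) = ∑ a ∈ Finset.range (N+1), (N.choose a : ℝ) * w a * Aw w (N-a) j := by
  rw [Aw, split_sum (k := j) (N := N) (0 : Fin (j+1))]
  apply Finset.sum_congr rfl
  intro a ha
  rw [Finset.mem_range] at ha
  rw [Aw, Finset.mul_sum]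
  apply Finset.sum_congr rfl
  intro t' ht'
  rw [Finset.Nat.mem_antidiagonalTuple] at ht'
  rw [multinomial_insertNth, ht', show a + (N - a) = N by omega]
  rw [Fin.prod_univ_succAbove
    (fun j' => w ((Fin.insertNth (α := fun _ => ℕ) 0 a t') j')) 0]
  simp only [Fin.insertNth_apply_same, Fin.insertNth_apply_succAbove]
  push_cast
  ring

lemma Bw_cons_succ (w : ℕ → ℝ) (N q : ℕ) :
    Bw w N (q+1)
      = ∑ a ∈ Finset.range N, (N.choose (a+1) : ℝ) * w (a+1) * Bw w (N-(a+1)) q := by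
  rw [Bw, split_sum_pos (k := q) (N := N) (0 : Fin (q+1))]
  apply Finset.sum_congr rfl
  intro a ha
  rw [Finset.mem_range] at ha
  rw [Bw, Finset.mul_sum]
  apply Finset.sum_congr rfl
  intro t' ht'
  rw [Finset.mem_filter, Finset.Nat.mem_antidiagonalTuple] at ht'
  rw [multinomial_insertNth, ht'.1, show (a+1) + (N - (a+1)) = N by omega]
  rw [Fin.prod_univ_succAbove
    (fun j' => w ((Fin.insertNth (α := fun _ => ℕ) 0 (a+1) t') j')) 0]
  simp only [Fin.insertNth_apply_same, Fin.insertNth_apply_succAbove]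
  push_cast
  ring

lemma pascal_sum (X : ℕ → ℝ) (j : ℕ) :
    ∑ q ∈ Finset.range (j+2), ((j+1).choose q : ℝ) * X q
      = ∑ q ∈ Finset.range (j+1), (j.choose q : ℝ) * X (q+1)
        + ∑ q ∈ Finset.range (j+1), (j.choose q : ℝ) * X q := by
  rw [Finset.sum_range_succ']
  have h1 : ∀ q ∈ Finset.range (j+1), ((j+1).choose (q+1) : ℝ) * X (q+1)
      = (j.choose q : ℝ) * X (q+1) + (j.choose (q+1) : ℝ) * X (q+1) := by
    intro q _
    rw [Nat.choose_succ_succ]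
    push_cast
    ring
  rw [Finset.sum_congr rfl h1, Finset.sum_add_distrib]
  have h2 : ∑ q ∈ Finset.range (j+1), (j.choose (q+1) : ℝ) * X (q+1)
        + ((j+1).choose 0 : ℝ) * X 0
      = ∑ q ∈ Finset.range (j+1), (j.choose q : ℝ) * X q := by
    have h3 : ((j+1).choose 0 : ℝ) * X 0 = (j.choose 0 : ℝ) * X 0 := by norm_num
    rw [h3, ← Finset.sum_range_succ' (fun q => (j.choose q : ℝ) * X q) (j+1),
      Finset.sum_range_succ, Nat.choose_succ_self]
    norm_num
  rw [add_assoc, h2]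

lemma Aw_eq (w : ℕ → ℝ) (hw : w 0 = 1) :
    ∀ j N : ℕ, Aw w N j = ∑ q ∈ Finset.range (j+1), (j.choose q : ℝ) * Bw w N q := by
  intro j
  induction j with
  | zero =>
    intro N
    rw [Finset.sum_range_one]
    simp only [Nat.choose_self, Nat.cast_one, one_mul]
    rw [Aw, Bw]
    apply Finset.sum_congr
    · symm
      apply Finset.filter_true_of_mem
      intro t _
      exact fun i => i.elim0
    · intros
      rfl
  | succ j IHj =>
    intro N
    rw [Aw_succ, Finset.sum_range_succ']
    simp only [Nat.choose_zero_right, Nat.cast_one, one_mul, Nat.sub_zero, hw, mul_one]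
    have h1 : ∀ a ∈ Finset.range N, (N.choose (a+1) : ℝ) * w (a+1) * Aw w (N-(a+1)) j
        = ∑ q ∈ Finset.range (j+1), (j.choose q : ℝ)
            * ((N.choose (a+1) : ℝ) * w (a+1) * Bw w (N-(a+1)) q) := by
      intro a _
      rw [IHj, Finset.mul_sum]
      apply Finset.sum_congr rfl
      intro q _
      ring
    rw [Finset.sum_congr rfl h1, Finset.sum_comm, IHj N,
      pascal_sum (X := fun q => Bw w N q) j]
    congr 1
    apply Finset.sum_congr rfl
    intro q _
    rw [Bw_cons_succ, Finset.mul_sum]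

lemma alt_sum (M : ℕ) :
    ∑ d ∈ Finset.range (M+1), (-1 : ℝ)^(M-d) * (M.choose d : ℝ)
      = if M = 0 then 1 else 0 := by
  have h0 := Int.alternating_sum_range_choose (n := M)
  have h : ((∑ d ∈ Finset.range (M+1), (-1 : ℤ)^d * (M.choose d : ℤ) : ℤ) : ℝ)
      = (((if M = 0 then 1 else 0 : ℤ)) : ℝ) := by
    exact_mod_cast congrArg (fun z : ℤ => (z : ℝ)) h0
  push_cast at h
  rw [← h]
  conv_rhs => rw [← Finset.sum_range_reflect]
  apply Finset.sum_congr rfl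
  intro d hd
  rw [Finset.mem_range] at hd
  have h3 : M + 1 - 1 - d = M - d := by omega
  rw [h3, Nat.choose_symm (show d ≤ M by omega)]

lemma alt_inversion (F G : ℕ → ℝ)
    (hF : ∀ j, F j = ∑ q ∈ Finset.range (j+1), (j.choose q : ℝ) * G q) (k : ℕ) :
    ∑ j ∈ Finset.range (k+1), (-1 : ℝ)^(k-j) * (k.choose j : ℝ) * F j = G k := by
  have h1 : ∀ j ∈ Finset.range (k+1), (-1 : ℝ)^(k-j) * (k.choose j : ℝ) * F j
      = ∑ q ∈ Finset.range (k+1), (if q ≤ j then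
          (-1 : ℝ)^(k-j) * (k.choose j : ℝ) * (j.choose q : ℝ) * G q else 0) := by
    intro j hj
    rw [Finset.mem_range] at hj
    rw [hF j, Finset.mul_sum]
    symm
    rw [← Finset.sum_filter]
    have hset : (Finset.range (k+1)).filter (fun q => q ≤ j) = Finset.range (j+1) := by
      ext q
      simp only [Finset.mem_filter, Finset.mem_range]
      omega
    rw [hset]
    apply Finset.sum_congr rfl
    intro q _
    ring
  rw [Finset.sum_congr rfl h1, Finset.sum_comm]
  have h2 : ∀ q ∈ Finset.range (k+1),
      (∑ j ∈ Finset.range (k+1), if q ≤ j then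
          (-1 : ℝ)^(k-j) * (k.choose j : ℝ) * (j.choose q : ℝ) * G q else 0)
      = (if q = k then 1 else 0) * G q := by
    intro q hq
    rw [Finset.mem_range] at hq
    rw [← Finset.sum_filter]
    have hset : (Finset.range (k+1)).filter (fun j => q ≤ j) = Finset.Ico q (k+1) := by
      ext j
      simp only [Finset.mem_filter, Finset.mem_range, Finset.mem_Ico]
      omega
    rw [hset, Finset.sum_Ico_eq_sum_range]
    have h3 : ∀ d ∈ Finset.range (k+1-q),
        (-1 : ℝ)^(k-(q+d)) * (k.choose (q+d) : ℝ) * ((q+d).choose q : ℝ) * G q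
        = (k.choose q : ℝ) * ((-1 : ℝ)^((k-q)-d) * (((k-q).choose d : ℝ))) * G q := by
      intro d hd
      rw [Finset.mem_range] at hd
      have hch : k.choose (q+d) * (q+d).choose q = k.choose q * (k-q).choose d := by
        have hcm := Nat.choose_mul (n := k) (k := q+d) (s := q) (by omega)
        simpa using hcm
      have hchr : (k.choose (q+d) : ℝ) * ((q+d).choose q : ℝ)
          = (k.choose q : ℝ) * ((k-q).choose d : ℝ) := by
        exact_mod_cast hch
      have hpow : k - (q+d) = (k-q) - d := by omega
      rw [hpow]
      linear_combination ((-1:ℝ)^((k-q)-d) * G q) * hchr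
    rw [Finset.sum_congr rfl h3, ← Finset.sum_mul, ← Finset.mul_sum]
    have h4 : k + 1 - q = (k - q) + 1 := by omega
    rw [h4, alt_sum (k-q)]
    rcases eq_or_ne q k with rfl | hqk
    · simp
    · rw [if_neg (show ¬ (k - q = 0) by omega), if_neg hqk]
      ring
  rw [Finset.sum_congr rfl h2]
  rw [Finset.sum_eq_single k (fun b _ hbk => by rw [if_neg hbk, zero_mul])
    (fun hk => absurd (Finset.self_mem_range_succ k) hk)]
  simp


/-! ### Algebra of the degenerate falling factorial -/

lemma degFall_zero (lam x : ℝ) : degFall lam x 0 = 1 := by simp [degFall]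

lemma degFall_succ (lam x : ℝ) (n : ℕ) :
    degFall lam x (n+1) = degFall lam x n * (x - (n:ℝ)*lam) := by
  rw [degFall, degFall, Finset.prod_range_succ]

lemma degFall_add (lam x : ℝ) (a b : ℕ) :
    degFall lam x (a+b) = degFall lam x a * degFall lam (x - (a:ℝ)*lam) b := by
  rw [degFall, degFall, degFall, Finset.prod_range_add]
  congr 1
  apply Finset.prod_congr rfl
  intro i _
  push_cast
  ring

lemma degFall_add_arg (lam x y : ℝ) (N : ℕ) : degFall lam (x+y) N
    = ∑ c ∈ Finset.range (N+1), (N.choose c : ℝ)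
        * (degFall lam x c * degFall lam y (N-c)) := by
  induction N with
  | zero => simp [degFall]
  | succ N IH =>
    rw [degFall_succ, IH,
      pascal_sum (X := fun c => degFall lam x c * degFall lam y (N+1-c)) N]
    rw [Finset.sum_mul, ← Finset.sum_add_distrib]
    apply Finset.sum_congr rfl
    intro c hc
    rw [Finset.mem_range] at hc
    rw [show N+1-(c+1) = N-c by omega, show N+1-c = (N-c)+1 by omega,
      degFall_succ, degFall_succ]
    have hcast : ((N-c : ℕ) : ℝ) = (N:ℝ) - (c:ℝ) := by
      rw [Nat.cast_sub (by omega : c ≤ N)]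
    rw [hcast]
    ring

lemma degFall_sum (lam : ℝ) : ∀ (k : ℕ) (x : Fin k → ℝ) (N : ℕ),
    degFall lam (∑ i, x i) N
      = ∑ t ∈ Finset.Nat.antidiagonalTuple k N,
          (Nat.multinomial Finset.univ t : ℝ) * ∏ i, degFall lam (x i) (t i) := by
  intro k
  induction k with
  | zero =>
    intro x N
    rcases N with _ | N
    · rw [Finset.Nat.antidiagonalTuple_zero_zero]
      simp [degFall, multinomial_zero_fn]
    · rw [Finset.Nat.antidiagonalTuple_zero_succ]
      simp only [Finset.sum_empty]
      rw [Finset.univ_eq_empty, Finset.sum_empty, degFall]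
      apply Finset.prod_eq_zero (Finset.mem_range.mpr (Nat.succ_pos N))
      simp
  | succ k IHk =>
    intro x N
    rw [split_sum (k := k) (N := N) (0 : Fin (k+1))
      (f := fun t => (Nat.multinomial Finset.univ t : ℝ) * ∏ i, degFall lam (x i) (t i))]
    rw [Fin.sum_univ_succ, degFall_add_arg]
    apply Finset.sum_congr rfl
    intro c hc
    rw [Finset.mem_range] at hc
    rw [IHk, Finset.mul_sum, Finset.mul_sum]
    apply Finset.sum_congr rfl
    intro t' ht'
    rw [Finset.Nat.mem_antidiagonalTuple] at ht'
    rw [multinomial_insertNth, ht', show c + (N-c) = N by omega]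
    rw [Fin.prod_univ_succAbove (fun i => degFall lam (x i)
      ((Fin.insertNth (α := fun _ => ℕ) 0 c t') i)) 0]
    simp only [Fin.insertNth_apply_same, Fin.insertNth_apply_succAbove]
    simp only [Fin.zero_succAbove]
    push_cast
    ring


/-! ### Probabilistic part -/

section Prob

variable {Ω : Type*} [MeasurableSpace Ω] (μ : Measure Ω) [IsProbabilityMeasure μ]
  (Y : ℕ → Ω → ℝ) (lam : ℝ)

/-- The moments `E[(Y)_{r,λ}]`. -/
noncomputable def wY : ℕ → ℝ := fun r => ∫ ω, degFall lam (Y 0 ω) r ∂μ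

set_option linter.unusedSectionVars false in
lemma degFall_continuous (lam : ℝ) (r : ℕ) : Continuous (fun x : ℝ => degFall lam x r) := by
  unfold degFall
  exact continuous_finset_prod _ (fun j _ => continuous_id.sub continuous_const)

lemma degFall_measurable (lam : ℝ) (r : ℕ) : Measurable (fun x : ℝ => degFall lam x r) :=
  (degFall_continuous lam r).measurable

variable (hmeas : ∀ i, Measurable (Y i))
  (hindep : iIndepFun Y μ)
  (hident : ∀ i, IdentDistrib (Y i) (Y 0) μ μ)
  (hmom : ∀ n : ℕ, Integrable (fun ω => |Y 0 ω| ^ n) μ)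

include hmeas hident hmom in
lemma integrable_pow (i p : ℕ) : Integrable (fun ω => (Y i ω)^p) μ := by
  have habs : Integrable (fun ω => |Y i ω| ^ p) μ := by
    have hid : IdentDistrib (fun ω => |Y i ω| ^ p) (fun ω => |Y 0 ω| ^ p) μ μ :=
      (hident i).comp (measurable_abs.pow_const p)
    exact hid.integrable_iff.mpr (hmom p)
  refine habs.mono' (((hmeas i).pow_const p).aestronglyMeasurable) ?_
  filter_upwards with ω
  rw [Real.norm_eq_abs, abs_pow]

include hmeas hident hmom in
lemma integrable_poly (i : ℕ) (p : Polynomial ℝ) :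
    Integrable (fun ω => p.eval (Y i ω)) μ := by
  have h : (fun ω => p.eval (Y i ω))
      = fun ω => ∑ j ∈ Finset.range (p.natDegree + 1), p.coeff j * (Y i ω)^j :=
    funext fun ω => Polynomial.eval_eq_sum_range _
  rw [h]
  exact integrable_finset_sum _
    (fun j _ => (integrable_pow μ Y hmeas hident hmom i j).const_mul _)

include hmeas hident hmom in
lemma integrable_degFall (i r : ℕ) :
    Integrable (fun ω => degFall lam (Y i ω) r) μ := by
  have h : ∀ x : ℝ, (∏ j ∈ Finset.range r,
      (Polynomial.X - Polynomial.C ((j:ℝ)*lam))).eval x = degFall lam x r := by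
    intro x
    rw [Polynomial.eval_prod, degFall]
    apply Finset.prod_congr rfl
    intro j _
    simp
  have h2 : (fun ω => degFall lam (Y i ω) r)
      = fun ω => (∏ j ∈ Finset.range r,
          (Polynomial.X - Polynomial.C ((j:ℝ)*lam))).eval (Y i ω) :=
    funext fun ω => (h (Y i ω)).symm
  rw [h2]
  exact integrable_poly μ Y hmeas hident hmom i _

include hmeas hindep hident hmom in
lemma prod_integral (k : ℕ) (m : ℕ → ℕ) :
    Integrable (fun ω => ∏ i ∈ Finset.range k, degFall lam (Y i ω) (m i)) μ ∧
    ∫ ω, (∏ i ∈ Finset.range k, degFall lam (Y i ω) (m i)) ∂μ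
      = ∏ i ∈ Finset.range k, wY μ Y lam (m i) := by
  induction k with
  | zero =>
    constructor
    · simpa using integrable_const (1:ℝ)
    · simp
  | succ k IH =>
    have hZind : iIndepFun
        (fun j ω => degFall lam (Y j ω) (m j)) μ :=
      hindep.comp (fun j x => degFall lam x (m j)) (fun j => degFall_measurable lam (m j))
    have hZmeas : ∀ j, Measurable (fun ω => degFall lam (Y j ω) (m j)) :=
      fun j => (degFall_measurable lam (m j)).comp (hmeas j)
    have hIndep : IndepFun (fun ω => ∏ i ∈ Finset.range k, degFall lam (Y i ω) (m i))
        (fun ω => degFall lam (Y k ω) (m k)) μ := by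
      have h := hZind.indepFun_prod_range_succ hZmeas k
      have hfn : (∏ j ∈ Finset.range k, fun ω => degFall lam (Y j ω) (m j))
          = fun ω => ∏ i ∈ Finset.range k, degFall lam (Y i ω) (m i) := by
        funext ω
        rw [Finset.prod_apply]
      rwa [hfn] at h
    have hint_k : Integrable (fun ω => degFall lam (Y k ω) (m k)) μ :=
      integrable_degFall μ Y lam hmeas hident hmom k (m k)
    have hprodmeas : AEStronglyMeasurable
        (fun ω => ∏ i ∈ Finset.range k, degFall lam (Y i ω) (m i)) μ :=
      (Finset.measurable_prod _ (fun i _ => hZmeas i)).aestronglyMeasurable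
    constructor
    · have h := hIndep.integrable_mul IH.1 hint_k
      have hfn : ((fun ω => ∏ i ∈ Finset.range k, degFall lam (Y i ω) (m i))
            * (fun ω => degFall lam (Y k ω) (m k)))
          = fun ω => ∏ i ∈ Finset.range (k+1), degFall lam (Y i ω) (m i) := by
        funext ω
        rw [Finset.prod_range_succ]
        rfl
      rwa [hfn] at h
    · have h := hIndep.integral_mul_eq_mul_integral hprodmeas hint_k.aestronglyMeasurable
      have hfn : ((fun ω => ∏ i ∈ Finset.range k, degFall lam (Y i ω) (m i))
            * (fun ω => degFall lam (Y k ω) (m k)))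
          = fun ω => ∏ i ∈ Finset.range (k+1), degFall lam (Y i ω) (m i) := by
        funext ω
        rw [Finset.prod_range_succ]
        rfl
      rw [hfn] at h
      rw [h, IH.2, Finset.prod_range_succ]
      congr 1
      have hid : IdentDistrib (fun ω => degFall lam (Y k ω) (m k))
          (fun ω => degFall lam (Y 0 ω) (m k)) μ μ :=
        (hident k).comp (degFall_measurable lam (m k))
      exact hid.integral_eq

include hmeas hindep hident hmom in
lemma int_prod_fin (k : ℕ) (t : Fin k → ℕ) :
    Integrable (fun ω => ∏ i : Fin k, degFall lam (Y (i:ℕ) ω) (t i)) μ ∧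
    ∫ ω, (∏ i : Fin k, degFall lam (Y (i:ℕ) ω) (t i)) ∂μ = ∏ i : Fin k, wY μ Y lam (t i) := by
  have hm := prod_integral μ Y lam hmeas hindep hident hmom k
    (fun a => if h : a < k then t ⟨a, h⟩ else 0)
  have hfn : (fun ω => ∏ i ∈ Finset.range k,
        degFall lam (Y i ω) (if h : i < k then t ⟨i, h⟩ else 0))
      = fun ω => ∏ i : Fin k, degFall lam (Y (i:ℕ) ω) (t i) := by
    funext ω
    rw [← Fin.prod_univ_eq_prod_range (fun i => degFall lam (Y i ω)
      (if h : i < k then t ⟨i, h⟩ else 0)) k]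
    apply Finset.prod_congr rfl
    intro i _
    rw [dif_pos i.isLt]
  have hfn2 : (∏ i ∈ Finset.range k, wY μ Y lam (if h : i < k then t ⟨i, h⟩ else 0))
      = ∏ i : Fin k, wY μ Y lam (t i) := by
    rw [← Fin.prod_univ_eq_prod_range (fun i => wY μ Y lam
      (if h : i < k then t ⟨i, h⟩ else 0)) k]
    apply Finset.prod_congr rfl
    intro i _
    rw [dif_pos i.isLt]
  rw [hfn, hfn2] at hm
  exact hm

include hmeas hindep hident hmom in
lemma int_degFall_sum (j N : ℕ) :
    ∫ ω, degFall lam (∑ i ∈ Finset.range j, Y i ω) N ∂μ = Aw (wY μ Y lam) N j := by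
  have hfn : (fun ω => degFall lam (∑ i ∈ Finset.range j, Y i ω) N)
      = fun ω => ∑ t ∈ Finset.Nat.antidiagonalTuple j N,
          (Nat.multinomial Finset.univ t : ℝ)
            * ∏ i : Fin j, degFall lam (Y (i:ℕ) ω) (t i) := by
    funext ω
    rw [← Fin.sum_univ_eq_sum_range (fun i => Y i ω) j, degFall_sum]
  rw [hfn, integral_finset_sum]
  · rw [Aw]
    apply Finset.sum_congr rfl
    intro t _
    rw [MeasureTheory.integral_const_mul, (int_prod_fin μ Y lam hmeas hindep hident hmom j t).2]
  · intro t _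
    exact ((int_prod_fin μ Y lam hmeas hindep hident hmom j t).1).const_mul _

include hmeas hindep hident hmom in
lemma int_degFall_shift (k n q : ℕ) (t : Fin k → ℕ) (hts : ∑ i, t i = n) :
    ∫ ω, degFall lam ((∑ i ∈ Finset.range k, Y i ω) - (n:ℝ)*lam) q
        * ∏ i : Fin k, degFall lam (Y (i:ℕ) ω) (t i) ∂μ
      = ∑ r ∈ Finset.Nat.antidiagonalTuple k q,
          (Nat.multinomial Finset.univ r : ℝ) * ∏ i : Fin k, wY μ Y lam (t i + r i) := by
  have hfn : (fun ω => degFall lam ((∑ i ∈ Finset.range k, Y i ω) - (n:ℝ)*lam) q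
        * ∏ i : Fin k, degFall lam (Y (i:ℕ) ω) (t i))
      = fun ω => ∑ r ∈ Finset.Nat.antidiagonalTuple k q,
          (Nat.multinomial Finset.univ r : ℝ)
            * ∏ i : Fin k, degFall lam (Y (i:ℕ) ω) (t i + r i) := by
    funext ω
    have harg : (∑ i ∈ Finset.range k, Y i ω) - (n:ℝ)*lam
        = ∑ i : Fin k, (Y (i:ℕ) ω - (t i : ℝ)*lam) := by
      rw [Finset.sum_sub_distrib, ← Fin.sum_univ_eq_sum_range (fun i => Y i ω) k]
      congr 1
      rw [← Finset.sum_mul]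
      congr 1
      rw [← hts]
      push_cast
      rfl
    rw [harg, degFall_sum, Finset.sum_mul]
    apply Finset.sum_congr rfl
    intro r _
    rw [mul_assoc]
    congr 1
    rw [← Finset.prod_mul_distrib]
    apply Finset.prod_congr rfl
    intro i _
    rw [degFall_add]
    ring
  rw [hfn, integral_finset_sum]
  · apply Finset.sum_congr rfl
    intro r _
    rw [MeasureTheory.integral_const_mul, (int_prod_fin μ Y lam hmeas hindep hident hmom k _).2]
  · intro r _
    exact ((int_prod_fin μ Y lam hmeas hindep hident hmom k _).1).const_mul _

end Prob

section Glue

variable {Ω : Type*} [MeasurableSpace Ω] (μ : Measure Ω) [IsProbabilityMeasure μ]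
  (Y : ℕ → Ω → ℝ) (lam : ℝ)
  (hmeas : ∀ i, Measurable (Y i))
  (hindep : iIndepFun Y μ)
  (hident : ∀ i, IdentDistrib (Y i) (Y 0) μ μ)
  (hmom : ∀ n : ℕ, Integrable (fun ω => |Y 0 ω| ^ n) μ)

include hmeas hindep hident hmom in
lemma bell_eq_Phiw (N : ℕ) : probDegBellNum μ Y lam N = Phiw (wY μ Y lam) N := by
  have hw0 : wY μ Y lam 0 = 1 := by
    rw [wY]
    simp [degFall_zero]
  rw [probDegBellNum, probDegBell, Phiw]
  apply Finset.sum_congr rfl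
  intro k _
  rw [one_pow, mul_one, probDegStirling]
  congr 1
  have hF : ∀ j, Aw (wY μ Y lam) N j
      = ∑ q ∈ Finset.range (j+1), (j.choose q : ℝ) * Bw (wY μ Y lam) N q :=
    fun j => Aw_eq (wY μ Y lam) hw0 j N
  have h := alt_inversion (fun j => Aw (wY μ Y lam) N j)
    (fun q => Bw (wY μ Y lam) N q) hF k
  rw [← h]
  apply Finset.sum_congr rfl
  intro j _
  rw [int_degFall_sum μ Y lam hmeas hindep hident hmom j N]

end Glue

end SpiveyAux

/-- Spivey-type relation for the probabilistic degenerate Bell numbers. -/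
theorem spivey_probDegBellNum {Ω : Type*} [MeasurableSpace Ω] (μ : Measure Ω)
    [IsProbabilityMeasure μ] (Y : ℕ → Ω → ℝ)
    (hmeas : ∀ i, Measurable (Y i))
    (hindep : iIndepFun Y μ)
    (hident : ∀ i, IdentDistrib (Y i) (Y 0) μ μ)
    (hmom : ∀ n : ℕ, Integrable (fun ω => |Y 0 ω| ^ n) μ)
    (lam : ℝ) (n l : ℕ) :
    probDegBellNum μ Y lam (l + n) =
      ∑ k ∈ Finset.range (n + 1), ∑ m ∈ Finset.range (l + 1),
        (Nat.choose l m : ℝ) * (1 / (Nat.factorial k : ℝ)) *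
        (∑ t ∈ (Finset.Nat.antidiagonalTuple k n).filter (fun t => ∀ i, 0 < t i),
          (Nat.multinomial Finset.univ t : ℝ) *
            ∫ ω, degFall lam ((∑ i ∈ Finset.range k, Y i ω) - (n : ℝ) * lam) (l - m) *
              ∏ i : Fin k, degFall lam (Y (i : ℕ) ω) (t i) ∂μ) *
        probDegBellNum μ Y lam m := by
  open SpiveyAux in
  rw [bell_eq_Phiw μ Y lam hmeas hindep hident hmom (l+n), core (wY μ Y lam) n l]
  apply Finset.sum_congr rfl
  intro k _
  apply Finset.sum_congr rfl
  intro m _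
  rw [SpiveyAux.bell_eq_Phiw μ Y lam hmeas hindep hident hmom m]
  have hD : SpiveyAux.Dw (SpiveyAux.wY μ Y lam) k n (l-m)
      = ∑ t ∈ (Finset.Nat.antidiagonalTuple k n).filter (fun t => ∀ i, 0 < t i),
          (Nat.multinomial Finset.univ t : ℝ) *
            ∫ ω, degFall lam ((∑ i ∈ Finset.range k, Y i ω) - (n : ℝ) * lam) (l - m) *
              ∏ i : Fin k, degFall lam (Y (i : ℕ) ω) (t i) ∂μ := by
    rw [SpiveyAux.Dw]
    apply Finset.sum_congr rfl
    intro t ht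
    rw [Finset.mem_filter, Finset.Nat.mem_antidiagonalTuple] at ht
    rw [SpiveyAux.int_degFall_shift μ Y lam hmeas hindep hident hmom k n (l-m) t ht.1]
  rw [hD]
end

section
/- Let λ ∈ ℝ, let r be a positive integer, and let (Y_j)_{j≥1} be i.i.d. real random variables with all moments finite. For all integers n, j ≥ 0 and all y ∈ ℝ, the probabilistic degenerate r-Bell polynomials satisfy: φ^{(r,Y)}_{j+n,λ}(y) = Σ_{l=0}^{n} C(n,l) (r)_{n−l,λ} Σ_{k=0}^{l} Σ_{m=0}^{j} (y^k / k!) C(j,m) Σ_{l₁+⋯+l_k = l, each lᵢ ≥ 1} C(l; l₁,…,l_k) · E[(S_k − nλ)_{j−m,λ} · ∏_{i=1}^{k} (Y_i)_{l_i,λ}] · φ^{(r,Y)}_{m,λ}(y), where the innermost sum is over all k-tuples (l₁,…,l_k) of positive integers with l₁+⋯+l_k = l and C(l; l₁,…,l_k) = l!/(l₁!⋯l_k!) is the multinomial coefficient. -/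
open MeasureTheory ProbabilityTheory Finset

/-- The probabilistic degenerate `r`-Bell polynomials associated with `Y`:
`φ^{(r,Y)}_{n,λ}(y) = ∑_{l=0}^{n} C(n,l) (r)_{n-l,λ} φ^Y_{l,λ}(y)`. -/
noncomputable def probDegrBell {Ω : Type*} [MeasurableSpace Ω] (μ : Measure Ω)
    (Y : ℕ → Ω → ℝ) (lam : ℝ) (r : ℕ) (n : ℕ) (y : ℝ) : ℝ :=
  ∑ l ∈ Finset.range (n + 1),
    (Nat.choose n l : ℝ) * degFall lam (r : ℝ) (n - l) * probDegBell μ Y lam l y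

section DegFall

lemma degFall_zero (lam x : ℝ) : degFall lam x 0 = 1 := by simp [degFall]

lemma degFall_succ (lam x : ℝ) (n : ℕ) :
    degFall lam x (n + 1) = degFall lam x n * (x - n * lam) :=
  Finset.prod_range_succ _ _

lemma degFall_add (lam x : ℝ) (a b : ℕ) :
    degFall lam x (a + b) = degFall lam x a * degFall lam (x - a * lam) b := by
  induction b with
  | zero => simp [degFall_zero]
  | succ b ih =>
    rw [show a + (b + 1) = (a + b) + 1 from rfl, degFall_succ, ih, degFall_succ, mul_assoc]
    congr 2
    push_cast
    ring

lemma degFall_zero_left (lam : ℝ) (q : ℕ) (hq : q ≠ 0) : degFall lam 0 q = 0 := by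
  obtain ⟨q, rfl⟩ := Nat.exists_eq_succ_of_ne_zero hq
  rw [show q.succ = 1 + q from by omega, degFall_add]
  simp [degFall, Finset.prod_range_one]

lemma degFall_vandermonde (lam x z : ℝ) (q : ℕ) :
    degFall lam (x + z) q =
      ∑ i ∈ Finset.range (q + 1),
        (q.choose i : ℝ) * degFall lam x i * degFall lam z (q - i) := by
  induction q with
  | zero => simp [degFall_zero]
  | succ q ih =>
    rw [degFall_succ, ih, Finset.sum_mul]
    have key : ∀ i ∈ Finset.range (q + 1),
        (q.choose i : ℝ) * degFall lam x i * degFall lam z (q - i) * (x + z - q * lam)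
          = (q.choose i : ℝ) * (degFall lam x (i + 1) * degFall lam z (q - i))
            + (q.choose i : ℝ) * (degFall lam x i * degFall lam z ((q - i) + 1)) := by
      intro i hi
      have hi' : i ≤ q := Nat.lt_succ_iff.mp (Finset.mem_range.mp hi)
      have h1 : x + z - q * lam = (x - i * lam) + (z - (q - i : ℕ) * lam) := by
        rw [Nat.cast_sub hi']
        ring
      rw [h1, degFall_succ, degFall_succ]
      ring
    rw [Finset.sum_congr rfl key, Finset.sum_add_distrib]
    rw [Finset.sum_range_succ' (fun i => ((q+1).choose i : ℝ) * degFall lam x i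
        * degFall lam z (q + 1 - i))]
    have hsplit : ∀ i ∈ Finset.range (q + 1),
        ((q+1).choose (i+1) : ℝ) * degFall lam x (i+1) * degFall lam z (q + 1 - (i+1))
          = (q.choose i : ℝ) * (degFall lam x (i+1) * degFall lam z (q - i))
            + (q.choose (i+1) : ℝ) * (degFall lam x (i+1) * degFall lam z (q - i)) := by
      intro i hi
      rw [Nat.choose_succ_succ]
      push_cast
      ring
    rw [Finset.sum_congr rfl hsplit, Finset.sum_add_distrib]
    have hQ : ∑ i ∈ Finset.range (q + 1),
          (q.choose i : ℝ) * (degFall lam x i * degFall lam z ((q - i) + 1))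
        = (∑ i ∈ Finset.range (q + 1),
            (q.choose (i+1) : ℝ) * (degFall lam x (i+1) * degFall lam z (q - i)))
          + ((q+1).choose 0 : ℝ) * degFall lam x 0 * degFall lam z (q + 1 - 0) := by
      have hg := Finset.sum_range_succ'
        (fun i => (q.choose i : ℝ) * (degFall lam x i * degFall lam z (q + 1 - i))) (q + 1)
      have hg2 : ∑ i ∈ Finset.range (q + 1 + 1),
          (q.choose i : ℝ) * (degFall lam x i * degFall lam z (q + 1 - i))
          = ∑ i ∈ Finset.range (q + 1),
            (q.choose i : ℝ) * (degFall lam x i * degFall lam z ((q - i) + 1)) := by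
        rw [Finset.sum_range_succ]
        simp only [Nat.choose_succ_self, Nat.cast_zero, zero_mul, add_zero]
        apply Finset.sum_congr rfl
        intro i hi
        have hi' : i ≤ q := Nat.lt_succ_iff.mp (Finset.mem_range.mp hi)
        rw [Nat.succ_sub hi']
      rw [hg2] at hg
      rw [hg]
      simp [degFall_zero]
    rw [hQ]
    ring

end DegFall
section Series

open PowerSeries

/-- `s`-fold formal derivative. -/
noncomputable def Dn (s : ℕ) : PowerSeries ℝ → PowerSeries ℝ :=
  (fun f => d⁄dX ℝ f)^[s]

lemma Dn_zero (f : PowerSeries ℝ) : Dn 0 f = f := rfl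

lemma Dn_succ (s : ℕ) (f : PowerSeries ℝ) : Dn (s + 1) f = Dn s (d⁄dX ℝ f) :=
  Function.iterate_succ_apply _ _ _

lemma Dn_succ' (s : ℕ) (f : PowerSeries ℝ) : Dn (s + 1) f = d⁄dX ℝ (Dn s f) :=
  Function.iterate_succ_apply' _ _ _

lemma coeff_Dn (s : ℕ) (f : PowerSeries ℝ) (p : ℕ) :
    coeff p (Dn s f) = ((p + s).factorial / p.factorial : ℝ) * coeff (p + s) f := by
  induction s generalizing f with
  | zero =>
    rw [Dn_zero, Nat.add_zero, div_self (Nat.cast_ne_zero.mpr (Nat.factorial_ne_zero p)), one_mul]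
  | succ s ih =>
    rw [Dn_succ, ih, coeff_derivative]
    have h1 : (p + (s + 1)) = (p + s) + 1 := by omega
    rw [h1]
    have h2 : ((p + s + 1).factorial : ℝ) = ((p + s).factorial : ℝ) * (p + s + 1) := by
      rw [Nat.factorial_succ]; push_cast; ring
    rw [h2]
    have : (p.factorial : ℝ) ≠ 0 := Nat.cast_ne_zero.mpr (Nat.factorial_ne_zero p)
    field_simp
    push_cast
    ring

lemma Dn_add (s : ℕ) (f g : PowerSeries ℝ) : Dn s (f + g) = Dn s f + Dn s g := by
  ext p
  simp [coeff_Dn, map_add, mul_add]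

lemma Dn_sum {ι : Type*} (s : ℕ) (t : Finset ι) (f : ι → PowerSeries ℝ) :
    Dn s (∑ i ∈ t, f i) = ∑ i ∈ t, Dn s (f i) := by
  ext p
  simp [coeff_Dn, Finset.mul_sum]

lemma Dn_C_mul (s : ℕ) (c : ℝ) (f : PowerSeries ℝ) :
    Dn s (C c * f) = C c * Dn s f := by
  ext p
  simp [coeff_Dn, coeff_C_mul]
  ring

lemma Dn_one (s : ℕ) (hs : s ≠ 0) : Dn s (1 : PowerSeries ℝ) = 0 := by
  obtain ⟨s, rfl⟩ := Nat.exists_eq_succ_of_ne_zero hs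
  rw [Dn_succ]
  have : d⁄dX ℝ (1 : PowerSeries ℝ) = 0 := by
    rw [show (1 : PowerSeries ℝ) = C 1 from by simp, derivative_C]
  rw [this]
  ext p
  simp [coeff_Dn]

/-- Higher Leibniz rule. -/
lemma Dn_mul (s : ℕ) (f g : PowerSeries ℝ) :
    Dn s (f * g) = ∑ i ∈ Finset.range (s + 1),
      C (s.choose i : ℝ) * (Dn i f * Dn (s - i) g) := by
  induction s with
  | zero => simp [Dn_zero]
  | succ s ih =>
    rw [Dn_succ', ih]
    have hD : ∀ h₁ h₂ : PowerSeries ℝ, d⁄dX ℝ (h₁ * h₂)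
        = d⁄dX ℝ h₁ * h₂ + h₁ * d⁄dX ℝ h₂ := by
      intro h₁ h₂
      rw [Derivation.leibniz, smul_eq_mul, smul_eq_mul]
      ring
    have hDC : ∀ (c : ℝ) (h : PowerSeries ℝ), d⁄dX ℝ (C c * h) = C c * d⁄dX ℝ h := by
      intro c h
      rw [hD, derivative_C, zero_mul, zero_add]
    rw [map_sum]
    have key : ∀ i ∈ Finset.range (s + 1),
        d⁄dX ℝ (C (s.choose i : ℝ) * (Dn i f * Dn (s - i) g))
          = C (s.choose i : ℝ) * (Dn (i+1) f * Dn (s - i) g)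
            + C (s.choose i : ℝ) * (Dn i f * Dn ((s - i) + 1) g) := by
      intro i hi
      rw [hDC, hD, Dn_succ', Dn_succ', mul_add]
    rw [Finset.sum_congr rfl key, Finset.sum_add_distrib]
    rw [Finset.sum_range_succ' (fun i => C ((s+1).choose i : ℝ) * (Dn i f * Dn (s + 1 - i) g))]
    have hsplit : ∀ i ∈ Finset.range (s + 1),
        C (((s+1).choose (i+1) : ℕ) : ℝ) * (Dn (i+1) f * Dn (s + 1 - (i+1)) g)
          = C (s.choose i : ℝ) * (Dn (i+1) f * Dn (s - i) g)
            + C (s.choose (i+1) : ℝ) * (Dn (i+1) f * Dn (s - i) g) := by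
      intro i hi
      have : (((s+1).choose (i+1) : ℕ) : ℝ) = (s.choose i : ℝ) + (s.choose (i+1) : ℝ) := by
        rw [Nat.choose_succ_succ]; push_cast; ring
      rw [this, map_add]
      have hss : s + 1 - (i + 1) = s - i := by omega
      rw [hss]
      ring
    rw [Finset.sum_congr rfl hsplit, Finset.sum_add_distrib]
    have hQ : ∑ i ∈ Finset.range (s + 1),
          C (s.choose i : ℝ) * (Dn i f * Dn ((s - i) + 1) g)
        = (∑ i ∈ Finset.range (s + 1),
            C (s.choose (i+1) : ℝ) * (Dn (i+1) f * Dn (s - i) g))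
          + C ((s+1).choose 0 : ℝ) * (Dn 0 f * Dn (s + 1 - 0) g) := by
      have hg := Finset.sum_range_succ'
        (fun i => C (s.choose i : ℝ) * (Dn i f * Dn (s + 1 - i) g)) (s + 1)
      have hg2 : ∑ i ∈ Finset.range (s + 1 + 1),
          C (s.choose i : ℝ) * (Dn i f * Dn (s + 1 - i) g)
          = ∑ i ∈ Finset.range (s + 1),
            C (s.choose i : ℝ) * (Dn i f * Dn ((s - i) + 1) g) := by
        rw [Finset.sum_range_succ]
        simp only [Nat.choose_succ_self, Nat.cast_zero, map_zero, zero_mul, add_zero]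
        apply Finset.sum_congr rfl
        intro i hi
        have hi' : i ≤ s := Nat.lt_succ_iff.mp (Finset.mem_range.mp hi)
        rw [Nat.succ_sub hi']
      rw [hg2] at hg
      rw [hg]
      simp
    rw [hQ]
    ring

/-- The exponential-type series `e_λ^x(t) = ∑ (x)_{p,λ} t^p/p!`. -/
noncomputable def eps (lam x : ℝ) : PowerSeries ℝ :=
  PowerSeries.mk fun p => degFall lam x p / p.factorial

lemma coeff_eps (lam x : ℝ) (p : ℕ) :
    coeff p (eps lam x) = degFall lam x p / p.factorial := coeff_mk _ _

lemma fact_div (q i : ℕ) (hi : i ≤ q) :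
    (1 / (i.factorial : ℝ)) * (1 / ((q - i).factorial : ℝ))
      = (q.choose i : ℝ) / (q.factorial : ℝ) := by
  have h := Nat.choose_mul_factorial_mul_factorial hi
  have h' : ((q.choose i : ℕ) : ℝ) * (i.factorial : ℝ) * ((q - i).factorial : ℝ)
      = (q.factorial : ℝ) := by exact_mod_cast congrArg (Nat.cast (R := ℝ)) h
  have h1 : (i.factorial : ℝ) ≠ 0 := Nat.cast_ne_zero.mpr (Nat.factorial_ne_zero _)
  have h2 : ((q - i).factorial : ℝ) ≠ 0 := Nat.cast_ne_zero.mpr (Nat.factorial_ne_zero _)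
  have h3 : (q.factorial : ℝ) ≠ 0 := Nat.cast_ne_zero.mpr (Nat.factorial_ne_zero _)
  field_simp
  linarith [h']

lemma eps_mul (lam x z : ℝ) : eps lam x * eps lam z = eps lam (x + z) := by
  ext q
  rw [coeff_mul, coeff_eps, degFall_vandermonde, Finset.Nat.sum_antidiagonal_eq_sum_range_succ_mk,
    Finset.sum_div]
  apply Finset.sum_congr rfl
  intro i hi
  have hi' : i ≤ q := Nat.lt_succ_iff.mp (Finset.mem_range.mp hi)
  rw [coeff_eps, coeff_eps]
  rw [div_mul_div_comm]
  rw [show degFall lam x i * degFall lam z (q - i) / ((i.factorial : ℝ) * ((q-i).factorial : ℝ))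
    = (degFall lam x i * degFall lam z (q - i)) * ((1 / (i.factorial : ℝ)) * (1 / ((q - i).factorial : ℝ))) from by ring]
  rw [fact_div q i hi']
  ring

lemma eps_zero (lam : ℝ) : eps lam 0 = 1 := by
  ext q
  rw [coeff_eps]
  cases q with
  | zero => simp [degFall_zero]
  | succ q =>
    rw [degFall_zero_left lam _ (Nat.succ_ne_zero q)]
    simp [PowerSeries.coeff_one]

lemma Dn_eps (lam x : ℝ) (s : ℕ) :
    Dn s (eps lam x) = C (degFall lam x s) * eps lam (x - s * lam) := by
  ext p
  rw [coeff_Dn, coeff_C_mul, coeff_eps, coeff_eps]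
  have h1 : degFall lam x (p + s) = degFall lam x s * degFall lam (x - s * lam) p := by
    rw [show p + s = s + p from by omega, degFall_add]
  rw [h1]
  have h3 : (p.factorial : ℝ) ≠ 0 := Nat.cast_ne_zero.mpr (Nat.factorial_ne_zero _)
  have h4 : ((p+s).factorial : ℝ) ≠ 0 := Nat.cast_ne_zero.mpr (Nat.factorial_ne_zero _)
  field_simp

end Series
set_option linter.unusedSectionVars false
set_option linter.unnecessarySimpa false
set_option maxHeartbeats 1000000
section Prob

lemma measurable_degFall (lam : ℝ) (s : ℕ) : Measurable fun x : ℝ => degFall lam x s := by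
  unfold degFall
  exact Finset.measurable_prod _ fun i _ => measurable_id.sub measurable_const

lemma abs_sub_le_abs_add_abs (a b : ℝ) : |a - b| ≤ |a| + |b| := by
  rw [sub_eq_add_neg]
  exact (abs_add_le _ _).trans (by rw [abs_neg])

lemma abs_degFall_le (lam x : ℝ) (s : ℕ) :
    |degFall lam x s| ≤ ((1 + s * |lam|) * (|x| + 1)) ^ s := by
  unfold degFall
  rw [Finset.abs_prod]
  have : ∀ i ∈ Finset.range s, |x - (i : ℝ) * lam| ≤ (1 + s * |lam|) * (|x| + 1) := by
    intro i hi
    have hi' : (i : ℝ) ≤ s := by exact_mod_cast (Finset.mem_range.mp hi).le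
    have h1 : |x - (i : ℝ) * lam| ≤ |x| + (i : ℝ) * |lam| := by
      have := abs_sub_le_abs_add_abs x ((i : ℝ) * lam)
      rwa [abs_mul, Nat.abs_cast] at this
    have h2 : (i : ℝ) * |lam| ≤ (s : ℝ) * |lam| :=
      mul_le_mul_of_nonneg_right hi' (abs_nonneg _)
    nlinarith [abs_nonneg x, abs_nonneg lam, mul_nonneg (Nat.cast_nonneg (α := ℝ) s) (abs_nonneg lam)]
  calc ∏ i ∈ Finset.range s, |x - (i : ℝ) * lam|
      ≤ ∏ _i ∈ Finset.range s, (1 + s * |lam|) * (|x| + 1) :=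
        Finset.prod_le_prod (fun i _ => abs_nonneg _) this
    _ = ((1 + s * |lam|) * (|x| + 1)) ^ s := by
        rw [Finset.prod_const, Finset.card_range]

variable {Ω : Type*} [MeasurableSpace Ω] {μ : Measure Ω} [IsProbabilityMeasure μ]
  {Y : ℕ → Ω → ℝ}

lemma integrable_one_add_abs_pow
    (hident : ∀ i, IdentDistrib (Y i) (Y 0) μ μ)
    (hmom : ∀ n : ℕ, Integrable (fun ω => |Y 0 ω| ^ n) μ) (i s : ℕ) :
    Integrable (fun ω => (|Y i ω| + 1) ^ s) μ := by
  have habs : ∀ k : ℕ, Integrable (fun ω => |Y i ω| ^ k) μ := by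
    intro k
    have hid : IdentDistrib (fun ω => |Y i ω| ^ k) (fun ω => |Y 0 ω| ^ k) μ μ :=
      (hident i).comp ((measurable_id.abs).pow_const k)
    exact hid.integrable_iff.mpr (hmom k)
  have hexp : (fun ω => (|Y i ω| + 1) ^ s)
      = fun ω => ∑ k ∈ Finset.range (s + 1), |Y i ω| ^ k * (1 : ℝ) ^ (s - k) * (s.choose k) := by
    funext ω
    rw [add_pow]
  rw [hexp]
  apply integrable_finset_sum
  intro k _
  simpa using ((habs k).mul_const ((s.choose k : ℝ)))

lemma integrable_degFall_comp
    (hident : ∀ i, IdentDistrib (Y i) (Y 0) μ μ)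
    (hmom : ∀ n : ℕ, Integrable (fun ω => |Y 0 ω| ^ n) μ)
    (hmeas : ∀ i, Measurable (Y i)) (lam : ℝ) (i s : ℕ) :
    Integrable (fun ω => degFall lam (Y i ω) s) μ := by
  have hg : Integrable (fun ω => (1 + s * |lam|) ^ s * (|Y i ω| + 1) ^ s) μ :=
    (integrable_one_add_abs_pow hident hmom i s).const_mul _
  apply hg.mono' (((measurable_degFall lam s).comp (hmeas i)).aestronglyMeasurable)
  filter_upwards with ω
  rw [Real.norm_eq_abs]
  calc |degFall lam (Y i ω) s| ≤ ((1 + s * |lam|) * (|Y i ω| + 1)) ^ s :=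
        abs_degFall_le lam (Y i ω) s
    _ = (1 + s * |lam|) ^ s * (|Y i ω| + 1) ^ s := mul_pow _ _ _

/-- Moments of the common distribution. -/
noncomputable def mom (μ : Measure Ω) (Y : ℕ → Ω → ℝ) (lam : ℝ) (p : ℕ) : ℝ :=
  ∫ ω, degFall lam (Y 0 ω) p ∂μ

/-- The shifted moment series `d_s`. -/
noncomputable def dser (μ : Measure Ω) (Y : ℕ → Ω → ℝ) (lam : ℝ) (s : ℕ) : PowerSeries ℝ :=
  PowerSeries.mk fun p => mom μ Y lam (s + p) / p.factorial

lemma coeff_dser (lam : ℝ) (s p : ℕ) :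
    PowerSeries.coeff p (dser μ Y lam s) = mom μ Y lam (s + p) / p.factorial :=
  PowerSeries.coeff_mk _ _

lemma integral_degFall_eq_mom
    (hident : ∀ i, IdentDistrib (Y i) (Y 0) μ μ) (lam : ℝ) (i s : ℕ) :
    ∫ ω, degFall lam (Y i ω) s ∂μ = mom μ Y lam s :=
  ((hident i).comp (measurable_degFall lam s)).integral_eq

lemma indepFun_head
    (hindep : iIndepFun Y μ)
    (hmeas : ∀ i, Measurable (Y i)) (k : ℕ)
    (φ : ((i : (Finset.range k : Finset ℕ)) → ℝ) → ℝ) (hφ : Measurable φ)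
    (g : ℝ → ℝ) (hg : Measurable g) :
    IndepFun (fun ω => φ fun i => Y i ω) (fun ω => g (Y k ω)) μ := by
  have h1 := hindep.indepFun_finset (Finset.range k) {k}
    (by simp) hmeas
  have hψ : Measurable fun v : (i : ({k} : Finset ℕ)) → ℝ =>
      g (v ⟨k, Finset.mem_singleton_self k⟩) := hg.comp (measurable_pi_apply _)
  exact h1.comp hφ hψ

/-- The master probabilistic lemma, proven by induction on the number of variables. -/
lemma main_prob
    (hmeas : ∀ i, Measurable (Y i))
    (hindep : iIndepFun Y μ)
    (hident : ∀ i, IdentDistrib (Y i) (Y 0) μ μ)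
    (hmom : ∀ n : ℕ, Integrable (fun ω => |Y 0 ω| ^ n) μ)
    (lam : ℝ) :
    ∀ (k : ℕ) (t : Fin k → ℕ) (c : ℝ) (q : ℕ),
      Integrable (fun ω => degFall lam ((∑ i ∈ Finset.range k, Y i ω) + c) q *
        ∏ i : Fin k, degFall lam (Y (i : ℕ) ω) (t i)) μ
      ∧ (∫ ω, degFall lam ((∑ i ∈ Finset.range k, Y i ω) + c) q *
          ∏ i : Fin k, degFall lam (Y (i : ℕ) ω) (t i) ∂μ)
        = (q.factorial : ℝ) * (PowerSeries.coeff q)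
            (eps lam (c + (∑ i, t i : ℕ) * lam) * ∏ i : Fin k, dser μ Y lam (t i)) := by
  intro k
  induction k with
  | zero =>
    intro t c q
    constructor
    · simpa using (integrable_const (degFall lam c q))
    · simp only [Finset.range_zero, Finset.sum_empty, zero_add, Finset.univ_eq_empty,
        Finset.prod_empty, mul_one, Finset.sum_empty, Nat.cast_zero, zero_mul, add_zero]
      rw [integral_const]
      simp only [measure_univ, ENNReal.toReal_one, smul_eq_mul, probReal_univ, one_mul]
      rw [coeff_eps]
      have : (q.factorial : ℝ) ≠ 0 := Nat.cast_ne_zero.mpr (Nat.factorial_ne_zero _)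
      field_simp
  | succ k ih =>
    intro t c q
    set s0 := t (Fin.last k) with hs0
    set c' := c + (s0 : ℝ) * lam with hc'
    set F : ℕ → Ω → ℝ := fun i ω =>
      degFall lam ((∑ i' ∈ Finset.range k, Y i' ω) + c') i *
        ∏ i' : Fin k, degFall lam (Y (i' : ℕ) ω) (t i'.castSucc) with hF
    set G : ℕ → Ω → ℝ := fun i ω => degFall lam (Y k ω) (s0 + (q - i)) with hG
    have hpt : ∀ ω, degFall lam ((∑ i' ∈ Finset.range (k+1), Y i' ω) + c) q *
        ∏ i' : Fin (k+1), degFall lam (Y (i' : ℕ) ω) (t i') =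
        ∑ i ∈ Finset.range (q+1), (q.choose i : ℝ) * (F i ω * G i ω) := by
      intro ω
      have h1 : (∑ i' ∈ Finset.range (k+1), Y i' ω) + c
          = ((∑ i' ∈ Finset.range k, Y i' ω) + c') + (Y k ω - (s0 : ℝ) * lam) := by
        rw [Finset.sum_range_succ, hc']; ring
      rw [h1, degFall_vandermonde, Fin.prod_univ_castSucc, Finset.sum_mul]
      apply Finset.sum_congr rfl
      intro i hi
      have h2 : degFall lam (Y k ω) (s0 + (q - i))
          = degFall lam (Y k ω) s0 * degFall lam (Y k ω - (s0 : ℝ) * lam) (q - i) := by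
        rw [degFall_add]
      simp only [hF, hG, Fin.val_last, Fin.coe_castSucc]
      rw [h2]
      ring
    -- independence of F i and G i
    have hind : ∀ i, IndepFun (F i) (G i) μ := by
      intro i
      have hφm : Measurable (fun v : ((j : (Finset.range k : Finset ℕ)) → ℝ) =>
          degFall lam ((∑ j ∈ (Finset.range k).attach, v j) + c') i *
            ∏ i' : Fin k, degFall lam (v ⟨(i' : ℕ), Finset.mem_range.mpr i'.isLt⟩)
              (t i'.castSucc)) := by
        apply Measurable.mul
        · exact (measurable_degFall lam i).comp
            ((Finset.measurable_sum _ fun j _ => measurable_pi_apply j).add_const c')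
        · exact Finset.measurable_prod _ fun i' _ =>
            (measurable_degFall lam _).comp (measurable_pi_apply _)
      have h := indepFun_head hindep hmeas k _ hφm
        (fun x => degFall lam x (s0 + (q - i))) (measurable_degFall lam _)
      have hFeq : (fun ω => (fun v : ((j : (Finset.range k : Finset ℕ)) → ℝ) =>
          degFall lam ((∑ j ∈ (Finset.range k).attach, v j) + c') i *
            ∏ i' : Fin k, degFall lam (v ⟨(i' : ℕ), Finset.mem_range.mpr i'.isLt⟩)
              (t i'.castSucc)) (fun j => Y (j : ℕ) ω)) = F i := by
        funext ω
        simp only [hF]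
        rw [Finset.sum_attach (Finset.range k) (fun j => Y j ω)]
      rw [hFeq] at h
      exact h
    have hFint : ∀ i, Integrable (F i) μ := fun i =>
      (ih (fun i' => t i'.castSucc) c' i).1
    have hGint : ∀ i, Integrable (G i) μ := fun i =>
      integrable_degFall_comp hident hmom hmeas lam k (s0 + (q - i))
    have hFGint : ∀ i, Integrable (fun ω => F i ω * G i ω) μ := fun i =>
      (hind i).integrable_mul (hFint i) (hGint i)
    constructor
    · have : (fun ω => degFall lam ((∑ i' ∈ Finset.range (k+1), Y i' ω) + c) q *
          ∏ i' : Fin (k+1), degFall lam (Y (i' : ℕ) ω) (t i')) =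
          fun ω => ∑ i ∈ Finset.range (q+1), (q.choose i : ℝ) * (F i ω * G i ω) := funext hpt
      rw [this]
      exact integrable_finset_sum _ fun i _ => ((hFGint i).const_mul _)
    · rw [integral_congr_ae (Filter.Eventually.of_forall hpt), integral_finset_sum _
        (fun i _ => ((hFGint i).const_mul _))]
      have hterm : ∀ i ∈ Finset.range (q+1),
          ∫ ω, (q.choose i : ℝ) * (F i ω * G i ω) ∂μ
          = (q.choose i : ℝ) * ((i.factorial : ℝ) * (PowerSeries.coeff i)
              (eps lam (c' + (∑ i' : Fin k, t i'.castSucc : ℕ) * lam) *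
                ∏ i' : Fin k, dser μ Y lam (t i'.castSucc))
              * mom μ Y lam (s0 + (q - i))) := by
        intro i hi
        rw [integral_const_mul]
        have hsplit : ∫ ω, F i ω * G i ω ∂μ = (∫ ω, F i ω ∂μ) * ∫ ω, G i ω ∂μ :=
          (hind i).integral_mul_eq_mul_integral (hFint i).aestronglyMeasurable (hGint i).aestronglyMeasurable
        rw [hsplit, (ih (fun i' => t i'.castSucc) c' i).2,
          integral_degFall_eq_mom hident lam k (s0 + (q - i))]
      rw [Finset.sum_congr rfl hterm]
      -- now compute the RHS
      have hprod : (∏ i' : Fin (k+1), dser μ Y lam (t i'))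
          = (∏ i' : Fin k, dser μ Y lam (t i'.castSucc)) * dser μ Y lam s0 := by
        rw [Fin.prod_univ_castSucc]
      have hexp : c + ((∑ i' : Fin (k+1), t i' : ℕ) : ℝ) * lam
          = c' + ((∑ i' : Fin k, t i'.castSucc : ℕ) : ℝ) * lam := by
        rw [Fin.sum_univ_castSucc, hc']
        push_cast
        ring
      rw [hprod, hexp, ← mul_assoc, PowerSeries.coeff_mul,
        Finset.Nat.sum_antidiagonal_eq_sum_range_succ_mk, Finset.mul_sum]
      apply Finset.sum_congr rfl
      intro i hi
      have hi' : i ≤ q := Nat.lt_succ_iff.mp (Finset.mem_range.mp hi)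
      rw [coeff_dser]
      have h := Nat.choose_mul_factorial_mul_factorial hi'
      have hfact : (q.factorial : ℝ)
          = (q.choose i : ℝ) * (i.factorial : ℝ) * ((q - i).factorial : ℝ) := by
        exact_mod_cast (congrArg (Nat.cast (R := ℝ)) h).symm
      rw [hfact]
      have h2 : ((q - i).factorial : ℝ) ≠ 0 := Nat.cast_ne_zero.mpr (Nat.factorial_ne_zero _)
      field_simp

end Prob
section Comb

open PowerSeries

lemma multinomial_univ_cons (k a : ℕ) (s : Fin k → ℕ) :
    Nat.multinomial Finset.univ (Fin.cons a s : Fin (k+1) → ℕ)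
      = (a + ∑ i, s i).choose a * Nat.multinomial Finset.univ s := by
  have hspec1 := Nat.multinomial_spec (Finset.univ : Finset (Fin (k+1))) (Fin.cons a s)
  have hspec2 := Nat.multinomial_spec (Finset.univ : Finset (Fin k)) s
  have hprod : (∏ i : Fin (k+1), ((Fin.cons a s : Fin (k+1) → ℕ) i).factorial)
      = a.factorial * ∏ i : Fin k, (s i).factorial := by
    rw [Fin.prod_univ_succ]
    simp
  have hsum : (∑ i : Fin (k+1), (Fin.cons a s : Fin (k+1) → ℕ) i) = a + ∑ i, s i := by
    rw [Fin.sum_univ_succ]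
    simp
  have hchoose := Nat.choose_mul_factorial_mul_factorial (Nat.le_add_right a (∑ i, s i))
  rw [Nat.add_sub_cancel_left] at hchoose
  apply Nat.eq_of_mul_eq_mul_left
    (show 0 < a.factorial * ∏ i : Fin k, (s i).factorial from
      Nat.mul_pos a.factorial_pos (Finset.prod_pos fun i _ => (s i).factorial_pos))
  calc (a.factorial * ∏ i : Fin k, (s i).factorial) *
        Nat.multinomial Finset.univ (Fin.cons a s : Fin (k+1) → ℕ)
      = (∏ i : Fin (k+1), ((Fin.cons a s : Fin (k+1) → ℕ) i).factorial) *
          Nat.multinomial Finset.univ (Fin.cons a s : Fin (k+1) → ℕ) := by rw [hprod]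
    _ = (∑ i : Fin (k+1), (Fin.cons a s : Fin (k+1) → ℕ) i).factorial := hspec1
    _ = (a + ∑ i, s i).factorial := by rw [hsum]
    _ = (a + ∑ i, s i).choose a * a.factorial * (∑ i, s i).factorial := hchoose.symm
    _ = (a + ∑ i, s i).choose a * a.factorial *
          ((∏ i : Fin k, (s i).factorial) * Nat.multinomial Finset.univ s) := by rw [hspec2]
    _ = (a.factorial * ∏ i : Fin k, (s i).factorial) *
          ((a + ∑ i, s i).choose a * Nat.multinomial Finset.univ s) := by ring

lemma sum_antidiagonalTuple_succ {M : Type*} [AddCommMonoid M] (k l : ℕ)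
    (f : (Fin (k+1) → ℕ) → M) :
    ∑ t ∈ Finset.Nat.antidiagonalTuple (k+1) l, f t
      = ∑ ab ∈ Finset.HasAntidiagonal.antidiagonal l,
          ∑ s ∈ Finset.Nat.antidiagonalTuple k ab.2, f (Fin.cons ab.1 s) := by
  have step : ∑ t ∈ Finset.Nat.antidiagonalTuple (k+1) l, f t
      = ∑ x ∈ (Finset.HasAntidiagonal.antidiagonal l).sigma
          (fun ab => Finset.Nat.antidiagonalTuple k ab.2), f (Fin.cons x.1.1 x.2) := by
    apply Finset.sum_nbij' (i := fun t => ⟨(t 0, ∑ i : Fin k, t i.succ), Fin.tail t⟩)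
      (j := fun p => Fin.cons p.1.1 p.2)
    · intro t ht
      rw [Finset.Nat.mem_antidiagonalTuple] at ht
      refine Finset.mem_sigma.mpr ⟨?_, ?_⟩
      · rw [Finset.HasAntidiagonal.mem_antidiagonal]
        rw [← ht, Fin.sum_univ_succ]
      · rw [Finset.Nat.mem_antidiagonalTuple]
        rfl
    · intro p hp
      rw [Finset.mem_sigma, Finset.HasAntidiagonal.mem_antidiagonal,
        Finset.Nat.mem_antidiagonalTuple] at hp
      rw [Finset.Nat.mem_antidiagonalTuple, Fin.sum_univ_succ]
      simp only [Fin.cons_zero, Fin.cons_succ]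
      rw [hp.2, hp.1]
    · intro t ht
      exact Fin.cons_self_tail t
    · intro p hp
      rw [Finset.mem_sigma, Finset.HasAntidiagonal.mem_antidiagonal,
        Finset.Nat.mem_antidiagonalTuple] at hp
      obtain ⟨⟨a, b⟩, s⟩ := p
      simp only [Fin.cons_zero, Fin.cons_succ, Fin.tail_cons]
      rw [show (∑ i : Fin k, s i) = b from hp.2]
    · intro t ht
      rw [Fin.cons_self_tail t]
  rw [step, Finset.sum_sigma]

/-- The Bell-polynomial-type series. -/
noncomputable def Sser (h : PowerSeries ℝ) (l k : ℕ) : PowerSeries ℝ :=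
  ∑ t ∈ (Finset.Nat.antidiagonalTuple k l).filter (fun t => ∀ i, 0 < t i),
    C (Nat.multinomial Finset.univ t : ℝ) * ∏ i : Fin k, Dn (t i) h

lemma Sser_zero_right (h : PowerSeries ℝ) (l : ℕ) :
    Sser h l 0 = if l = 0 then 1 else 0 := by
  unfold Sser
  cases l with
  | zero =>
    rw [Finset.Nat.antidiagonalTuple_zero_zero]
    rw [Finset.filter_true_of_mem (fun t _ => fun i => i.elim0)]
    simp
  | succ l =>
    rw [Finset.Nat.antidiagonalTuple_zero_succ]
    simp

lemma Sser_eq_zero_of_lt (h : PowerSeries ℝ) (l k : ℕ) (hlk : l < k) :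
    Sser h l k = 0 := by
  unfold Sser
  rw [Finset.filter_false_of_mem, Finset.sum_empty]
  intro t ht hpos
  rw [Finset.Nat.mem_antidiagonalTuple] at ht
  have : (k : ℕ) ≤ ∑ i, t i := by
    calc (k : ℕ) = ∑ _i : Fin k, 1 := by simp
    _ ≤ ∑ i, t i := Finset.sum_le_sum fun i _ => hpos i
  omega

lemma Sser_succ (h : PowerSeries ℝ) (l k : ℕ) :
    Sser h l (k+1) = ∑ s ∈ Finset.range l,
      C (l.choose (s+1) : ℝ) * (Dn (s+1) h * Sser h (l - (s+1)) k) := by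
  unfold Sser
  rw [Finset.sum_filter, sum_antidiagonalTuple_succ,
    Finset.Nat.sum_antidiagonal_eq_sum_range_succ_mk, Finset.sum_range_succ']
  have hzero : (∑ s ∈ Finset.Nat.antidiagonalTuple k ((0 : ℕ), l - 0).2,
      if ∀ i, 0 < (Fin.cons ((0 : ℕ), l - 0).1 s : Fin (k+1) → ℕ) i then
        C (Nat.multinomial Finset.univ (Fin.cons ((0:ℕ), l-0).1 s) : ℝ) *
          ∏ i : Fin (k+1), Dn ((Fin.cons ((0:ℕ), l-0).1 s : Fin (k+1) → ℕ) i) h else 0) = 0 := by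
    apply Finset.sum_eq_zero
    intro s hs
    rw [if_neg]
    intro hpos
    exact absurd (hpos 0) (by simp)
  rw [hzero, add_zero]
  apply Finset.sum_congr rfl
  intro a ha
  have ha' : a + 1 ≤ l := Finset.mem_range.mp ha
  have hinner : ∀ s ∈ Finset.Nat.antidiagonalTuple k ((a+1 : ℕ), l - (a+1)).2,
      (if ∀ i, 0 < (Fin.cons ((a+1:ℕ), l-(a+1)).1 s : Fin (k+1) → ℕ) i then
        C (Nat.multinomial Finset.univ (Fin.cons ((a+1:ℕ), l-(a+1)).1 s) : ℝ) *
          ∏ i : Fin (k+1), Dn ((Fin.cons ((a+1:ℕ), l-(a+1)).1 s : Fin (k+1) → ℕ) i) h else 0)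
      = C (l.choose (a+1) : ℝ) * (Dn (a+1) h *
          (if ∀ i, 0 < s i then
            C (Nat.multinomial Finset.univ s : ℝ) * ∏ i : Fin k, Dn (s i) h else 0)) := by
    intro s hs
    rw [Finset.Nat.mem_antidiagonalTuple] at hs
    by_cases hpos : ∀ i, 0 < s i
    · rw [if_pos, if_pos hpos]
      · have hm : Nat.multinomial Finset.univ (Fin.cons (a+1) s : Fin (k+1) → ℕ)
            = l.choose (a+1) * Nat.multinomial Finset.univ s := by
          rw [multinomial_univ_cons]
          congr 2
          simp only [hs]
          omega
        have hp : (∏ i : Fin (k+1), Dn ((Fin.cons (a+1:ℕ) s : Fin (k+1) → ℕ) i) h)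
            = Dn (a+1) h * ∏ i : Fin k, Dn (s i) h := by
          rw [Fin.prod_univ_succ]
          simp
        rw [hm, hp]
        push_cast
        rw [map_mul]
        ring
      · intro i
        refine Fin.cases ?_ ?_ i
        · simp
        · intro i'
          simpa using hpos i'
    · rw [if_neg, if_neg hpos, mul_zero, mul_zero]
      intro hall
      apply hpos
      intro i
      simpa using hall i.succ
  rw [Finset.sum_congr rfl hinner, ← Finset.mul_sum, ← Finset.mul_sum, ← Finset.sum_filter]

end Comb
section PowId

open PowerSeries

lemma coeff_pow_mul_eq_zero {h f : PowerSeries ℝ} (hh : constantCoeff h = 0)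
    {b q : ℕ} (hq : q < b) : coeff q (h ^ b * f) = 0 := by
  have h1 : (X : PowerSeries ℝ) ∣ h := X_dvd_iff.mpr hh
  have h2 : (X : PowerSeries ℝ) ^ b ∣ h ^ b * f :=
    Dvd.dvd.mul_right (pow_dvd_pow_of_dvd h1 b) f
  exact X_pow_dvd_iff.mp h2 q hq

lemma coeff_pow_eq_zero {h : PowerSeries ℝ} (hh : constantCoeff h = 0)
    {b q : ℕ} (hq : q < b) : coeff q (h ^ b) = 0 := by
  have := coeff_pow_mul_eq_zero (f := 1) hh hq
  rwa [mul_one] at this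

lemma Dn_pow (h : PowerSeries ℝ) (k : ℕ) : ∀ l,
    Dn l (h ^ k) = ∑ a ∈ Finset.range (k+1),
      C (k.choose a : ℝ) * (h ^ (k - a) * Sser h l a) := by
  induction k with
  | zero =>
    intro l
    rw [pow_zero]
    rw [Finset.sum_range_one]
    rw [Sser_zero_right]
    cases l with
    | zero => simp [Dn_zero]
    | succ l => simp [Dn_one l.succ (Nat.succ_ne_zero l)]
  | succ k ih =>
    intro l
    rw [show h ^ (k+1) = h * h ^ k from by ring, Dn_mul, Finset.sum_range_succ']
    have hzero : C ((l.choose 0 : ℕ) : ℝ) * (Dn 0 h * Dn (l - 0) (h ^ k))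
        = ∑ a ∈ Finset.range (k+1), C (k.choose a : ℝ)
            * (h ^ ((k - a) + 1) * Sser h l a) := by
      rw [Nat.choose_zero_right, Nat.cast_one, map_one, one_mul, Dn_zero, Nat.sub_zero, ih l,
        Finset.mul_sum]
      apply Finset.sum_congr rfl
      intro a _
      rw [pow_succ']
      ring
    rw [hzero]
    have hmain : ∑ s ∈ Finset.range l,
        C ((l.choose (s+1) : ℕ) : ℝ) * (Dn (s+1) h * Dn (l - (s+1)) (h ^ k))
        = ∑ a ∈ Finset.range (k+1), C (k.choose a : ℝ) * (h ^ (k - a) * Sser h l (a+1)) := by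
      have hs : ∀ s ∈ Finset.range l,
          C ((l.choose (s+1) : ℕ) : ℝ) * (Dn (s+1) h * Dn (l - (s+1)) (h ^ k))
          = ∑ a ∈ Finset.range (k+1), C (k.choose a : ℝ) *
              (h ^ (k - a) * (C ((l.choose (s+1) : ℕ) : ℝ)
                * (Dn (s+1) h * Sser h (l - (s+1)) a))) := by
        intro s _
        rw [ih (l - (s+1)), Finset.mul_sum, Finset.mul_sum]
        apply Finset.sum_congr rfl
        intro a _
        ring
      rw [Finset.sum_congr rfl hs, Finset.sum_comm]
      apply Finset.sum_congr rfl
      intro a _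
      rw [Sser_succ, Finset.mul_sum, Finset.mul_sum]
    rw [hmain]
    -- now the Pascal recombination
    rw [Finset.sum_range_succ' (fun a => C (((k+1).choose a : ℕ) : ℝ)
        * (h ^ (k + 1 - a) * Sser h l a))]
    have hsplit : ∀ a ∈ Finset.range (k+1),
        C (((k+1).choose (a+1) : ℕ) : ℝ) * (h ^ (k + 1 - (a+1)) * Sser h l (a+1))
          = C ((k.choose a : ℕ) : ℝ) * (h ^ (k - a) * Sser h l (a+1))
            + C ((k.choose (a+1) : ℕ) : ℝ) * (h ^ (k - a) * Sser h l (a+1)) := by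
      intro a _
      have hc : (((k+1).choose (a+1) : ℕ) : ℝ) = (k.choose a : ℝ) + (k.choose (a+1) : ℝ) := by
        rw [Nat.choose_succ_succ]; push_cast; ring
      rw [hc, map_add, show k + 1 - (a+1) = k - a from by omega]
      ring
    rw [Finset.sum_congr rfl hsplit, Finset.sum_add_distrib]
    have hQ : ∑ a ∈ Finset.range (k+1),
          C ((k.choose a : ℕ) : ℝ) * (h ^ ((k - a) + 1) * Sser h l a)
        = (∑ a ∈ Finset.range (k+1),
            C ((k.choose (a+1) : ℕ) : ℝ) * (h ^ (k - a) * Sser h l (a+1)))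
          + C (((k+1).choose 0 : ℕ) : ℝ) * (h ^ (k + 1 - 0) * Sser h l 0) := by
      have hg := Finset.sum_range_succ'
        (fun a => C ((k.choose a : ℕ) : ℝ) * (h ^ (k + 1 - a) * Sser h l a)) (k + 1)
      have hg2 : ∑ a ∈ Finset.range (k + 1 + 1),
          C ((k.choose a : ℕ) : ℝ) * (h ^ (k + 1 - a) * Sser h l a)
          = ∑ a ∈ Finset.range (k + 1),
            C ((k.choose a : ℕ) : ℝ) * (h ^ ((k - a) + 1) * Sser h l a) := by
        rw [Finset.sum_range_succ]
        simp only [Nat.choose_succ_self, Nat.cast_zero, map_zero, zero_mul, add_zero]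
        apply Finset.sum_congr rfl
        intro a ha
        have ha' : a ≤ k := Nat.lt_succ_iff.mp (Finset.mem_range.mp ha)
        rw [show k + 1 - a = (k - a) + 1 from by omega]
      have hg3 : ∀ a ∈ Finset.range (k+1),
          C ((k.choose (a+1) : ℕ) : ℝ) * (h ^ (k + 1 - (a+1)) * Sser h l (a+1))
          = C ((k.choose (a+1) : ℕ) : ℝ) * (h ^ (k - a) * Sser h l (a+1)) := by
        intro a _
        rw [show k + 1 - (a+1) = k - a from by omega]
      rw [hg2, Finset.sum_congr rfl hg3] at hg
      rw [hg]
      simp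
    rw [hQ]
    ring

/-- Diagonal reindexing of a double sum. -/
lemma sum_range_triangle {M : Type*} [AddCommMonoid M] (N : ℕ) (F : ℕ → ℕ → M) :
    ∑ k ∈ Finset.range N, ∑ a ∈ Finset.range (k+1), F k a
      = ∑ a ∈ Finset.range N, ∑ b ∈ Finset.range (N - a), F (a+b) a := by
  have h1 : ∑ x ∈ (Finset.range N).sigma (fun k => Finset.range (k+1)),
      F x.1 x.2 = ∑ k ∈ Finset.range N, ∑ a ∈ Finset.range (k+1), F k a :=
    Finset.sum_sigma _ _ _
  have h2 : ∑ x ∈ (Finset.range N).sigma (fun a => Finset.range (N - a)),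
      F (x.1 + x.2) x.1 = ∑ a ∈ Finset.range N, ∑ b ∈ Finset.range (N - a), F (a+b) a :=
    Finset.sum_sigma _ _ _
  rw [← h1, ← h2]
  apply Finset.sum_nbij' (i := fun p => ⟨p.2, p.1 - p.2⟩) (j := fun p => ⟨p.1 + p.2, p.1⟩)
  · intro p hp
    obtain ⟨k, a⟩ := p
    simp only [Finset.mem_sigma, Finset.mem_range] at hp ⊢
    omega
  · intro p hp
    obtain ⟨a, b⟩ := p
    simp only [Finset.mem_sigma, Finset.mem_range] at hp ⊢
    omega
  · intro p hp
    obtain ⟨k, a⟩ := p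
    simp only [Finset.mem_sigma, Finset.mem_range] at hp
    dsimp only
    rw [show a + (k - a) = k from by omega]
  · intro p hp
    obtain ⟨a, b⟩ := p
    simp only [Finset.mem_sigma, Finset.mem_range] at hp
    dsimp only
    rw [show a + b - a = b from by omega]
  · intro p hp
    obtain ⟨k, a⟩ := p
    simp only [Finset.mem_sigma, Finset.mem_range] at hp
    dsimp only
    rw [show a + (k - a) = k from by omega]

end PowId
section BSeries

open PowerSeries

variable {Ω : Type*} [MeasurableSpace Ω] {μ : Measure Ω} [IsProbabilityMeasure μ]
  {Y : ℕ → Ω → ℝ}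

/-- The centered moment generating series `H`. -/
noncomputable def Hser (μ : Measure Ω) (Y : ℕ → Ω → ℝ) (lam : ℝ) : PowerSeries ℝ :=
  dser μ Y lam 0 - 1

/-- The Bell series `B`. -/
noncomputable def Bser (μ : Measure Ω) (Y : ℕ → Ω → ℝ) (lam y : ℝ) : PowerSeries ℝ :=
  PowerSeries.mk fun p => probDegBell μ Y lam p y / p.factorial

/-- The `r`-Bell series. -/
noncomputable def Pser (μ : Measure Ω) (Y : ℕ → Ω → ℝ) (lam : ℝ) (r : ℕ) (y : ℝ) :
    PowerSeries ℝ :=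
  PowerSeries.mk fun m => probDegrBell μ Y lam r m y / m.factorial

lemma constantCoeff_Hser (lam : ℝ) : constantCoeff (Hser μ Y lam) = 0 := by
  unfold Hser
  rw [map_sub, ← coeff_zero_eq_constantCoeff_apply, coeff_dser]
  unfold mom
  simp [degFall_zero]

lemma Dn_Hser (lam : ℝ) (s : ℕ) (hs : s ≠ 0) :
    Dn s (Hser μ Y lam) = dser μ Y lam s := by
  unfold Hser
  rw [sub_eq_add_neg, Dn_add]
  have h1 : Dn s (-1 : PowerSeries ℝ) = 0 := by
    have : (-1 : PowerSeries ℝ) = C (-1) * 1 := by simp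
    rw [this, Dn_C_mul, Dn_one s hs, mul_zero]
  rw [h1, add_zero]
  ext p
  rw [coeff_Dn, coeff_dser, coeff_dser]
  rw [show 0 + (p + s) = s + p from by omega]
  have h3 : (p.factorial : ℝ) ≠ 0 := Nat.cast_ne_zero.mpr (Nat.factorial_ne_zero _)
  have h4 : (((p+s)).factorial : ℝ) ≠ 0 := Nat.cast_ne_zero.mpr (Nat.factorial_ne_zero _)
  field_simp

lemma coeff_upow
    (hmeas : ∀ i, Measurable (Y i))
    (hindep : iIndepFun Y μ)
    (hident : ∀ i, IdentDistrib (Y i) (Y 0) μ μ)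
    (hmom : ∀ n : ℕ, Integrable (fun ω => |Y 0 ω| ^ n) μ)
    (lam : ℝ) (i p : ℕ) :
    coeff p ((dser μ Y lam 0) ^ i)
      = (∫ ω, degFall lam (∑ j ∈ Finset.range i, Y j ω) p ∂μ) / p.factorial := by
  have h := (main_prob hmeas hindep hident hmom lam i (fun _ => 0) 0 p).2
  simp only [degFall_zero, Finset.prod_const_one, mul_one, add_zero,
    Finset.sum_const_zero, Nat.cast_zero, zero_mul, zero_add] at h
  rw [eps_zero, one_mul, Finset.prod_const, Finset.card_univ, Fintype.card_fin] at h
  rw [h]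
  have h3 : (p.factorial : ℝ) ≠ 0 := Nat.cast_ne_zero.mpr (Nat.factorial_ne_zero _)
  field_simp

lemma Hser_pow_expand (lam : ℝ) (k : ℕ) :
    (Hser μ Y lam) ^ k = ∑ i ∈ Finset.range (k+1),
      C ((-1 : ℝ) ^ (k - i) * (k.choose i : ℝ)) * (dser μ Y lam 0) ^ i := by
  unfold Hser
  rw [sub_eq_add_neg, add_pow]
  apply Finset.sum_congr rfl
  intro i _
  have h1 : (-1 : PowerSeries ℝ) = C (-1) := by simp
  have h2 : ((k.choose i : ℕ) : PowerSeries ℝ) = C ((k.choose i : ℕ) : ℝ) := by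
    simp [map_natCast]
  rw [h1, h2, map_mul, map_pow]
  ring

lemma coeff_Bser
    (hmeas : ∀ i, Measurable (Y i))
    (hindep : iIndepFun Y μ)
    (hident : ∀ i, IdentDistrib (Y i) (Y 0) μ μ)
    (hmom : ∀ n : ℕ, Integrable (fun ω => |Y 0 ω| ^ n) μ)
    (lam y : ℝ) (p : ℕ) :
    coeff p (Bser μ Y lam y) = ∑ k ∈ Finset.range (p+1),
      y ^ k / (k.factorial : ℝ) * coeff p ((Hser μ Y lam) ^ k) := by
  unfold Bser
  rw [coeff_mk]
  unfold probDegBell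
  rw [Finset.sum_div]
  apply Finset.sum_congr rfl
  intro k _
  unfold probDegStirling
  rw [Hser_pow_expand, map_sum]
  have hterm : ∀ i ∈ Finset.range (k+1),
      coeff p (C ((-1 : ℝ) ^ (k - i) * (k.choose i : ℝ)) * (dser μ Y lam 0) ^ i)
      = (-1 : ℝ) ^ (k - i) * (k.choose i : ℝ) *
          ((∫ ω, degFall lam (∑ j ∈ Finset.range i, Y j ω) p ∂μ) / p.factorial) := by
    intro i _
    rw [coeff_C_mul, coeff_upow hmeas hindep hident hmom]
  rw [Finset.sum_congr rfl hterm]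
  have h3 : (p.factorial : ℝ) ≠ 0 := Nat.cast_ne_zero.mpr (Nat.factorial_ne_zero _)
  have h4 : (k.factorial : ℝ) ≠ 0 := Nat.cast_ne_zero.mpr (Nat.factorial_ne_zero _)
  rw [Finset.mul_sum, Finset.sum_mul, Finset.sum_div, Finset.mul_sum]
  apply Finset.sum_congr rfl
  intro i _
  field_simp

lemma coeff_Hpow_eq_zero (lam : ℝ) {b q : ℕ} (hq : q < b) :
    coeff q ((Hser μ Y lam) ^ b) = 0 :=
  coeff_pow_eq_zero (constantCoeff_Hser lam) hq

lemma coeff_Bser_mul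
    (hmeas : ∀ i, Measurable (Y i))
    (hindep : iIndepFun Y μ)
    (hident : ∀ i, IdentDistrib (Y i) (Y 0) μ μ)
    (hmom : ∀ n : ℕ, Integrable (fun ω => |Y 0 ω| ^ n) μ)
    (lam y : ℝ) (f : PowerSeries ℝ) (q : ℕ) :
    coeff q (Bser μ Y lam y * f) = ∑ b ∈ Finset.range (q+1),
      y ^ b / (b.factorial : ℝ) * coeff q ((Hser μ Y lam) ^ b * f) := by
  rw [coeff_mul]
  have hterm : ∀ ij ∈ Finset.HasAntidiagonal.antidiagonal q,
      coeff ij.1 (Bser μ Y lam y) * coeff ij.2 f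
      = ∑ b ∈ Finset.range (q+1), y ^ b / (b.factorial : ℝ)
          * coeff ij.1 ((Hser μ Y lam) ^ b) * coeff ij.2 f := by
    intro ij hij
    rw [Finset.HasAntidiagonal.mem_antidiagonal] at hij
    rw [coeff_Bser hmeas hindep hident hmom, Finset.sum_mul]
    apply Finset.sum_subset
    · intro b hb
      rw [Finset.mem_range] at hb ⊢
      omega
    · intro b _ hb
      rw [Finset.mem_range, not_lt] at hb
      rw [coeff_Hpow_eq_zero lam (by omega)]
      ring
  rw [Finset.sum_congr rfl hterm, Finset.sum_comm]
  apply Finset.sum_congr rfl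
  intro b _
  rw [coeff_mul, Finset.mul_sum]
  apply Finset.sum_congr rfl
  intro ij _
  ring

end BSeries
section FaaDiBruno

open PowerSeries

variable {Ω : Type*} [MeasurableSpace Ω] {μ : Measure Ω} [IsProbabilityMeasure μ]
  {Y : ℕ → Ω → ℝ}

/-- The Bell-sum multiplier series. -/
noncomputable def Mser (μ : Measure Ω) (Y : ℕ → Ω → ℝ) (lam y : ℝ) (l : ℕ) : PowerSeries ℝ :=
  ∑ k ∈ Finset.range (l+1), C (y ^ k / (k.factorial : ℝ)) * Sser (Hser μ Y lam) l k

lemma Dn_Bser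
    (hmeas : ∀ i, Measurable (Y i))
    (hindep : iIndepFun Y μ)
    (hident : ∀ i, IdentDistrib (Y i) (Y 0) μ μ)
    (hmom : ∀ n : ℕ, Integrable (fun ω => |Y 0 ω| ^ n) μ)
    (lam y : ℝ) (l : ℕ) :
    Dn l (Bser μ Y lam y) = Bser μ Y lam y * Mser μ Y lam y l := by
  set H := Hser μ Y lam with hH
  ext q
  rw [coeff_Dn, coeff_Bser hmeas hindep hident hmom, Finset.mul_sum]
  have h1 : ∀ k ∈ Finset.range (q + l + 1),
      ((q+l).factorial / (q.factorial) : ℝ) * (y ^ k / (k.factorial : ℝ) * coeff (q+l) (H ^ k))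
      = ∑ a ∈ Finset.range (k+1),
          y ^ k / (k.factorial : ℝ) * (k.choose a : ℝ) * coeff q (H ^ (k - a) * Sser H l a) := by
    intro k _
    have : ((q+l).factorial / (q.factorial) : ℝ) * (y ^ k / (k.factorial : ℝ)
        * coeff (q+l) (H ^ k)) = y ^ k / (k.factorial : ℝ) * coeff q (Dn l (H ^ k)) := by
      rw [coeff_Dn]
      ring
    rw [this, Dn_pow, map_sum, Finset.mul_sum]
    apply Finset.sum_congr rfl
    intro a _
    rw [coeff_C_mul]
    ring
  rw [Finset.sum_congr rfl h1, sum_range_triangle]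
  have h2 : ∀ a ∈ Finset.range (q + l + 1), ∀ b ∈ Finset.range (q + l + 1 - a),
      y ^ (a+b) / ((a+b).factorial : ℝ) * ((a+b).choose a : ℝ)
          * coeff q (H ^ ((a+b) - a) * Sser H l a)
      = y ^ a / (a.factorial : ℝ) * (y ^ b / (b.factorial : ℝ))
          * coeff q (H ^ b * Sser H l a) := by
    intro a _ b _
    rw [Nat.add_sub_cancel_left]
    have hf := fact_div (a+b) a (Nat.le_add_right a b)
    rw [Nat.add_sub_cancel_left] at hf
    rw [pow_add]
    have h4 : ((a+b).factorial : ℝ) ≠ 0 := Nat.cast_ne_zero.mpr (Nat.factorial_ne_zero _)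
    have h5 : (a.factorial : ℝ) ≠ 0 := Nat.cast_ne_zero.mpr (Nat.factorial_ne_zero _)
    have h6 : (b.factorial : ℝ) ≠ 0 := Nat.cast_ne_zero.mpr (Nat.factorial_ne_zero _)
    field_simp at hf ⊢
    rw [hf]
  rw [Finset.sum_congr rfl (fun a ha => Finset.sum_congr rfl (h2 a ha))]
  -- range pruning
  have hvan : ∀ a b : ℕ, (l < a ∨ q < b) →
      y ^ a / (a.factorial : ℝ) * (y ^ b / (b.factorial : ℝ))
        * coeff q (H ^ b * Sser H l a) = 0 := by
    intro a b hab
    rcases hab with h | h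
    · rw [Sser_eq_zero_of_lt H l a h, mul_zero, map_zero, mul_zero]
    · rw [coeff_pow_mul_eq_zero (constantCoeff_Hser lam) h, mul_zero]
  have hinner : ∀ a ∈ Finset.range (q + l + 1),
      (∑ b ∈ Finset.range (q + l + 1 - a),
        y ^ a / (a.factorial : ℝ) * (y ^ b / (b.factorial : ℝ))
          * coeff q (H ^ b * Sser H l a))
      = ∑ b ∈ Finset.range (q + 1),
        y ^ a / (a.factorial : ℝ) * (y ^ b / (b.factorial : ℝ))
          * coeff q (H ^ b * Sser H l a) := by
    intro a _
    have e1 : ∑ b ∈ Finset.range (q + l + 1 - a), y ^ a / (a.factorial : ℝ)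
        * (y ^ b / (b.factorial : ℝ)) * coeff q (H ^ b * Sser H l a)
        = ∑ b ∈ Finset.range (q + l + 1), y ^ a / (a.factorial : ℝ)
            * (y ^ b / (b.factorial : ℝ)) * coeff q (H ^ b * Sser H l a) := by
      apply Finset.sum_subset
      · intro b hb
        rw [Finset.mem_range] at hb ⊢
        omega
      · intro b hb hb2
        rw [Finset.mem_range] at hb hb2
        apply hvan
        omega
    have e2 : ∑ b ∈ Finset.range (q + 1), y ^ a / (a.factorial : ℝ)
        * (y ^ b / (b.factorial : ℝ)) * coeff q (H ^ b * Sser H l a)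
        = ∑ b ∈ Finset.range (q + l + 1), y ^ a / (a.factorial : ℝ)
            * (y ^ b / (b.factorial : ℝ)) * coeff q (H ^ b * Sser H l a) := by
      apply Finset.sum_subset
      · intro b hb
        rw [Finset.mem_range] at hb ⊢
        omega
      · intro b hb hb2
        rw [Finset.mem_range] at hb hb2
        apply hvan
        omega
    rw [e1, ← e2]
  rw [Finset.sum_congr rfl hinner]
  have houter : ∑ a ∈ Finset.range (q + l + 1), ∑ b ∈ Finset.range (q + 1),
        y ^ a / (a.factorial : ℝ) * (y ^ b / (b.factorial : ℝ))
          * coeff q (H ^ b * Sser H l a)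
      = ∑ a ∈ Finset.range (l + 1), ∑ b ∈ Finset.range (q + 1),
        y ^ a / (a.factorial : ℝ) * (y ^ b / (b.factorial : ℝ))
          * coeff q (H ^ b * Sser H l a) := by
    symm
    apply Finset.sum_subset
    · intro a ha
      rw [Finset.mem_range] at ha ⊢
      omega
    · intro a ha ha2
      rw [Finset.mem_range] at ha ha2
      apply Finset.sum_eq_zero
      intro b _
      apply hvan
      omega
  rw [houter]
  -- compute RHS
  unfold Mser
  rw [Finset.mul_sum, map_sum]
  apply Finset.sum_congr rfl
  intro a _
  have : Bser μ Y lam y * (C (y ^ a / (a.factorial : ℝ)) * Sser H l a)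
      = C (y ^ a / (a.factorial : ℝ)) * (Bser μ Y lam y * Sser H l a) := by ring
  rw [← hH, this, coeff_C_mul, coeff_Bser_mul hmeas hindep hident hmom, Finset.mul_sum]
  apply Finset.sum_congr rfl
  intro b _
  ring

lemma Pser_eq (lam : ℝ) (r : ℕ) (y : ℝ) :
    Pser μ Y lam r y = Bser μ Y lam y * eps lam (r : ℝ) := by
  ext m
  unfold Pser
  rw [coeff_mk, coeff_mul, Finset.Nat.sum_antidiagonal_eq_sum_range_succ_mk]
  unfold probDegrBell
  rw [Finset.sum_div]
  apply Finset.sum_congr rfl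
  intro i hi
  have hi' : i ≤ m := Nat.lt_succ_iff.mp (Finset.mem_range.mp hi)
  unfold Bser
  rw [coeff_mk, coeff_eps]
  have h := Nat.choose_mul_factorial_mul_factorial hi'
  have h' : ((m.choose i : ℕ) : ℝ) * (i.factorial : ℝ) * ((m - i).factorial : ℝ)
      = (m.factorial : ℝ) := by exact_mod_cast congrArg (Nat.cast (R := ℝ)) h
  have h3 : (i.factorial : ℝ) ≠ 0 := Nat.cast_ne_zero.mpr (Nat.factorial_ne_zero _)
  have h4 : ((m - i).factorial : ℝ) ≠ 0 := Nat.cast_ne_zero.mpr (Nat.factorial_ne_zero _)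
  have h5 : (m.factorial : ℝ) ≠ 0 := Nat.cast_ne_zero.mpr (Nat.factorial_ne_zero _)
  have h6 : ((m.choose i : ℕ) : ℝ) ≠ 0 :=
    Nat.cast_ne_zero.mpr (Nat.choose_pos hi').ne'
  rw [← h']
  field_simp

end FaaDiBruno
section Assembly

open PowerSeries

theorem spivey_probDegrBell' {Ω : Type*} [MeasurableSpace Ω] (μ : Measure Ω)
    [IsProbabilityMeasure μ] (Y : ℕ → Ω → ℝ)
    (hmeas : ∀ i, Measurable (Y i))
    (hindep : iIndepFun Y μ)
    (hident : ∀ i, IdentDistrib (Y i) (Y 0) μ μ)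
    (hmom : ∀ n : ℕ, Integrable (fun ω => |Y 0 ω| ^ n) μ)
    (lam : ℝ) (r : ℕ) (hr : 0 < r) (n j : ℕ) (y : ℝ) :
    probDegrBell μ Y lam r (j + n) y =
      ∑ l ∈ Finset.range (n + 1), (Nat.choose n l : ℝ) * degFall lam (r : ℝ) (n - l) *
        ∑ k ∈ Finset.range (l + 1), ∑ m ∈ Finset.range (j + 1),
          (y ^ k / (Nat.factorial k : ℝ)) * (Nat.choose j m : ℝ) *
          (∑ t ∈ (Finset.Nat.antidiagonalTuple k l).filter (fun t => ∀ i, 0 < t i),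
            (Nat.multinomial Finset.univ t : ℝ) *
              ∫ ω, degFall lam ((∑ i ∈ Finset.range k, Y i ω) - (n : ℝ) * lam) (j - m) *
                ∏ i : Fin k, degFall lam (Y (i : ℕ) ω) (t i) ∂μ) *
          probDegrBell μ Y lam r m y := by
  have hfj : ((j.factorial : ℕ) : ℝ) ≠ 0 := Nat.cast_ne_zero.mpr (Nat.factorial_ne_zero _)
  -- abbreviation for the Ξ-series
  set Xi : ∀ k : ℕ, (Fin k → ℕ) → PowerSeries ℝ := fun k t =>
    eps lam (-((n : ℝ) * lam) + ((∑ i, t i : ℕ) : ℝ) * lam) * ∏ i : Fin k, dser μ Y lam (t i)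
    with hXi
  -- Step 1: LHS as a coefficient
  have hL : probDegrBell μ Y lam r (j + n) y
      = (j.factorial : ℝ) * coeff j (Dn n (Pser μ Y lam r y)) := by
    rw [coeff_Dn]
    show _ = (j.factorial : ℝ) * (_ * coeff (j + n) (PowerSeries.mk
      fun m => probDegrBell μ Y lam r m y / m.factorial))
    rw [coeff_mk]
    have h4 : (((j+n)).factorial : ℝ) ≠ 0 := Nat.cast_ne_zero.mpr (Nat.factorial_ne_zero _)
    field_simp
  -- Step 2: the series identity
  have hser : Dn n (Pser μ Y lam r y)
      = ∑ l ∈ Finset.range (n+1),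
          C ((n.choose l : ℝ) * degFall lam (r : ℝ) (n - l)) *
          ∑ k ∈ Finset.range (l+1), C (y ^ k / (k.factorial : ℝ)) *
            ∑ t ∈ (Finset.Nat.antidiagonalTuple k l).filter (fun t => ∀ i, 0 < t i),
              C (Nat.multinomial Finset.univ t : ℝ) *
                (Pser μ Y lam r y * Xi k t) := by
    conv_lhs => rw [Pser_eq, Dn_mul]
    apply Finset.sum_congr rfl
    intro l hl
    have hl' : l ≤ n := Nat.lt_succ_iff.mp (Finset.mem_range.mp hl)
    rw [Dn_Bser hmeas hindep hident hmom, Dn_eps]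
    unfold Mser Sser
    simp only [Finset.mul_sum, Finset.sum_mul]
    apply Finset.sum_congr rfl
    intro k _
    apply Finset.sum_congr rfl
    intro t ht
    rw [Finset.mem_filter, Finset.Nat.mem_antidiagonalTuple] at ht
    have hprodD : (∏ i : Fin k, Dn (t i) (Hser μ Y lam)) = ∏ i : Fin k, dser μ Y lam (t i) :=
      Finset.prod_congr rfl fun i _ => Dn_Hser lam (t i) (ht.2 i).ne'
    have hepsm : eps lam ((r : ℝ) - ((n - l : ℕ) : ℝ) * lam)
        = eps lam (r : ℝ) * eps lam (-((n : ℝ) * lam) + ((∑ i, t i : ℕ) : ℝ) * lam) := by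
      rw [eps_mul]
      congr 1
      rw [ht.1, Nat.cast_sub hl']
      ring
    rw [hXi]
    rw [Pser_eq, hprodD, hepsm, map_mul]
    ring
  -- Step 3: rewrite and match coefficients
  rw [hL, hser, map_sum, Finset.mul_sum]
  apply Finset.sum_congr rfl
  intro l hl
  rw [coeff_C_mul, map_sum]
  have hinner : ∀ k ∈ Finset.range (l+1),
      coeff j (C (y ^ k / (k.factorial : ℝ)) *
        ∑ t ∈ (Finset.Nat.antidiagonalTuple k l).filter (fun t => ∀ i, 0 < t i),
          C (Nat.multinomial Finset.univ t : ℝ) * (Pser μ Y lam r y * Xi k t))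
      = y ^ k / (k.factorial : ℝ) *
          ∑ t ∈ (Finset.Nat.antidiagonalTuple k l).filter (fun t => ∀ i, 0 < t i),
            (Nat.multinomial Finset.univ t : ℝ) * coeff j (Pser μ Y lam r y * Xi k t) := by
    intro k _
    rw [coeff_C_mul, map_sum]
    congr 1
    apply Finset.sum_congr rfl
    intro t _
    rw [coeff_C_mul]
  rw [Finset.sum_congr rfl hinner]
  -- Step 4: expand each coefficient of `P * Xi` as a sum over m and match
  have hcoeffP : ∀ k, ∀ t : Fin k → ℕ, coeff j (Pser μ Y lam r y * Xi k t)
      = ∑ m ∈ Finset.range (j+1),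
          probDegrBell μ Y lam r m y / (m.factorial : ℝ) * coeff (j - m) (Xi k t) := by
    intro k t
    rw [coeff_mul, Finset.Nat.sum_antidiagonal_eq_sum_range_succ_mk]
    apply Finset.sum_congr rfl
    intro m _
    unfold Pser
    rw [coeff_mk]
  have hIval : ∀ (k : ℕ) (t : Fin k → ℕ) (m : ℕ),
      (∫ ω, degFall lam ((∑ i ∈ Finset.range k, Y i ω) - (n : ℝ) * lam) (j - m) *
        ∏ i : Fin k, degFall lam (Y (i : ℕ) ω) (t i) ∂μ)
      = ((j-m).factorial : ℝ) * coeff (j - m) (Xi k t) := by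
    intro k t m
    have h := (main_prob hmeas hindep hident hmom lam k t (-((n : ℝ) * lam)) (j - m)).2
    simp only [← sub_eq_add_neg] at h
    rw [h, hXi]
  -- Step 5: per k, rearrange the (m, t) double sum
  have hk : ∀ k ∈ Finset.range (l+1),
      ∑ m ∈ Finset.range (j + 1),
        (y ^ k / (k.factorial : ℝ)) * (j.choose m : ℝ) *
        (∑ t ∈ (Finset.Nat.antidiagonalTuple k l).filter (fun t => ∀ i, 0 < t i),
          (Nat.multinomial Finset.univ t : ℝ) *
            ∫ ω, degFall lam ((∑ i ∈ Finset.range k, Y i ω) - (n : ℝ) * lam) (j - m) *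
              ∏ i : Fin k, degFall lam (Y (i : ℕ) ω) (t i) ∂μ) *
        probDegrBell μ Y lam r m y
      = (j.factorial : ℝ) * (y ^ k / (k.factorial : ℝ) *
          ∑ t ∈ (Finset.Nat.antidiagonalTuple k l).filter (fun t => ∀ i, 0 < t i),
            (Nat.multinomial Finset.univ t : ℝ) * coeff j (Pser μ Y lam r y * Xi k t)) := by
    intro k _
    have hstep : ∀ m ∈ Finset.range (j + 1),
        (y ^ k / (k.factorial : ℝ)) * (j.choose m : ℝ) *
        (∑ t ∈ (Finset.Nat.antidiagonalTuple k l).filter (fun t => ∀ i, 0 < t i),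
          (Nat.multinomial Finset.univ t : ℝ) *
            ∫ ω, degFall lam ((∑ i ∈ Finset.range k, Y i ω) - (n : ℝ) * lam) (j - m) *
              ∏ i : Fin k, degFall lam (Y (i : ℕ) ω) (t i) ∂μ) *
        probDegrBell μ Y lam r m y
        = ∑ t ∈ (Finset.Nat.antidiagonalTuple k l).filter (fun t => ∀ i, 0 < t i),
            (y ^ k / (k.factorial : ℝ)) * (Nat.multinomial Finset.univ t : ℝ) *
              ((j.choose m : ℝ) * ((j-m).factorial : ℝ) * probDegrBell μ Y lam r m y
                * coeff (j - m) (Xi k t)) := by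
      intro m _
      rw [Finset.mul_sum, Finset.sum_mul]
      apply Finset.sum_congr rfl
      intro t _
      rw [hIval k t m]
      ring
    rw [Finset.sum_congr rfl hstep, Finset.sum_comm]
    rw [Finset.mul_sum, Finset.mul_sum]
    apply Finset.sum_congr rfl
    intro t _
    rw [hcoeffP k t, Finset.mul_sum, Finset.mul_sum, Finset.mul_sum]
    apply Finset.sum_congr rfl
    intro m hm
    have hm' : m ≤ j := Nat.lt_succ_iff.mp (Finset.mem_range.mp hm)
    have h := Nat.choose_mul_factorial_mul_factorial hm'
    have h' : ((j.choose m : ℕ) : ℝ) * (m.factorial : ℝ) * ((j - m).factorial : ℝ)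
        = (j.factorial : ℝ) := by exact_mod_cast congrArg (Nat.cast (R := ℝ)) h
    have h5 : (m.factorial : ℝ) ≠ 0 := Nat.cast_ne_zero.mpr (Nat.factorial_ne_zero _)
    rw [← h']
    field_simp
  rw [Finset.sum_congr rfl hk, ← Finset.mul_sum]
  ring

end Assembly

/-- Spivey-type relation for the probabilistic degenerate `r`-Bell polynomials. -/
theorem spivey_probDegrBell {Ω : Type*} [MeasurableSpace Ω] (μ : Measure Ω)
    [IsProbabilityMeasure μ] (Y : ℕ → Ω → ℝ)
    (hmeas : ∀ i, Measurable (Y i))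
    (hindep : iIndepFun Y μ)
    (hident : ∀ i, IdentDistrib (Y i) (Y 0) μ μ)
    (hmom : ∀ n : ℕ, Integrable (fun ω => |Y 0 ω| ^ n) μ)
    (lam : ℝ) (r : ℕ) (hr : 0 < r) (n j : ℕ) (y : ℝ) :
    probDegrBell μ Y lam r (j + n) y =
      ∑ l ∈ Finset.range (n + 1), (Nat.choose n l : ℝ) * degFall lam (r : ℝ) (n - l) *
        ∑ k ∈ Finset.range (l + 1), ∑ m ∈ Finset.range (j + 1),
          (y ^ k / (Nat.factorial k : ℝ)) * (Nat.choose j m : ℝ) *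
          (∑ t ∈ (Finset.Nat.antidiagonalTuple k l).filter (fun t => ∀ i, 0 < t i),
            (Nat.multinomial Finset.univ t : ℝ) *
              ∫ ω, degFall lam ((∑ i ∈ Finset.range k, Y i ω) - (n : ℝ) * lam) (j - m) *
                ∏ i : Fin k, degFall lam (Y (i : ℕ) ω) (t i) ∂μ) *
          probDegrBell μ Y lam r m y := by
  exact spivey_probDegrBell' μ Y hmeas hindep hident hmom lam r hr n j y
end
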